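/- arXiv:0807.3240 — 4 statements merged into one kernel-verified Lean document; each statement's English description precedes it below -/
import Mathlib

section
/- Let k be a field. Then the Novikov ring Nov_k is a field. -/
/-- The Novikov condition: for every `c ∈ ℝ` the set of exponents `γ > c`
with nonzero coefficient is finite. -/
def NovCond (k : Type) [Zero k] (x : ℝ → k) : Prop :=
  ∀ c : ℝ, {γ : ℝ | x γ ≠ 0 ∧ c < γ}.Finite

/-- The underlying set of the Novikov ring `Nov_k`: formal series
`Σ_γ x(γ)·t^γ` satisfying the Novikov finiteness condition. -/
def Nov (k : Type) [Zero k] : Type :=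
  {x : ℝ → k // NovCond k x}


open Set Pointwise


/-- A Novikov set: every upper tail is finite. -/
def NovSet (s : Set ℝ) : Prop := ∀ c : ℝ, {γ ∈ s | c < γ}.Finite

lemma NovSet.subset {s t : Set ℝ} (h : s ⊆ t) (ht : NovSet t) : NovSet s :=
  fun c => (ht c).subset (fun γ hγ => ⟨h hγ.1, hγ.2⟩)

lemma NovSet.bddAbove {s : Set ℝ} (hs : NovSet s) : BddAbove s := by
  have : s ⊆ {γ ∈ s | 0 < γ} ∪ Iic 0 := by
    intro γ hγ
    rcases le_or_gt γ 0 with h | h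
    · exact Or.inr h
    · exact Or.inl ⟨hγ, h⟩
  exact (BddAbove.union (hs 0).bddAbove (bddAbove_Iic)).mono this

lemma NovSet.add {s t : Set ℝ} (hs : NovSet s) (ht : NovSet t) : NovSet (s + t) := by
  intro c
  obtain ⟨Ms, hMs⟩ := hs.bddAbove
  obtain ⟨Mt, hMt⟩ := ht.bddAbove
  have : {γ ∈ s + t | c < γ} ⊆
      (fun p : ℝ × ℝ => p.1 + p.2) '' ({a ∈ s | c - Mt < a} ×ˢ {b ∈ t | c - Ms < b}) := by
    rintro γ ⟨⟨a, ha, b, hb, rfl⟩, hc⟩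
    have hc' : c < a + b := hc
    refine ⟨(a, b), ⟨⟨ha, ?_⟩, ⟨hb, ?_⟩⟩, rfl⟩
    · have := hMt hb; simp only; linarith
    · have := hMs ha; simp only; linarith
  exact (((hs _).prod (ht _)).image _).subset this

lemma NovSet.isPWO {s : Set ℝ} (hs : NovSet s) :
    Set.IsPWO {γ : ℝᵒᵈ | OrderDual.ofDual γ ∈ s} := by
  rw [Set.isPWO_iff_isWF, Set.isWF_iff_no_descending_seq]
  intro f hf hmem
  -- f : ℕ → ℝᵒᵈ strictly antitone, i.e. strictly monotone as reals
  have hmono : StrictMono (fun n => OrderDual.ofDual (f n) : ℕ → ℝ) := by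
    intro m n hmn
    exact hf hmn
  have hfin := hs (OrderDual.ofDual (f 0))
  have hsub : Set.range (fun n => OrderDual.ofDual (f (n + 1))) ⊆
      {γ ∈ s | OrderDual.ofDual (f 0) < γ} := by
    rintro γ ⟨n, rfl⟩
    exact ⟨hmem (n + 1), hmono (Nat.succ_pos n)⟩
  have : (Set.range (fun n => OrderDual.ofDual (f (n + 1)))).Finite := hfin.subset hsub
  have hinj : Function.Injective (fun n => OrderDual.ofDual (f (n + 1))) := by
    intro m n h
    exact Nat.succ_injective (hmono.injective h)
  exact Set.infinite_range_of_injective hinj this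

lemma NovSet.exists_eps {s : Set ℝ} (hs : NovSet s) (hneg : ∀ γ ∈ s, γ < 0) :
    ∃ ε : ℝ, 0 < ε ∧ ∀ γ ∈ s, γ ≤ -ε := by
  have hfin := hs (-1)
  rcases eq_or_ne {γ ∈ s | (-1:ℝ) < γ} ∅ with h | h
  · refine ⟨1, one_pos, fun γ hγ => ?_⟩
    by_contra hlt
    exact absurd (Set.eq_empty_iff_forall_notMem.1 h γ ⟨hγ, by linarith⟩) (fun x => x)
  · obtain ⟨m, hm, hmax⟩ := Set.Finite.exists_maximalFor id _ hfin (Set.nonempty_iff_ne_empty.2 h)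
    refine ⟨-m, by simpa using hneg m hm.1, fun γ hγ => ?_⟩
    rcases le_or_gt γ (-1) with h1 | h1
    · have : (-1:ℝ) ≤ m := by linarith [hm.2]
      linarith
    · have : γ ≤ m := by
        by_contra hlt
        push_neg at hlt
        have := hmax (j := γ) ⟨hγ, by linarith⟩ hlt.le
        simp only [id] at this
        linarith
      linarith

variable {k : Type} [Field k]

/-- The real support of a Hahn series over `ℝᵒᵈ`. -/
def hsupp (x : HahnSeries ℝᵒᵈ k) : Set ℝ := {γ : ℝ | x.coeff (OrderDual.toDual γ) ≠ 0}

/-- Novikov condition for Hahn series. -/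
def Pn (x : HahnSeries ℝᵒᵈ k) : Prop := NovSet (hsupp x)

lemma NovSet.union {s t : Set ℝ} (hs : NovSet s) (ht : NovSet t) : NovSet (s ∪ t) := by
  intro c
  refine ((hs c).union (ht c)).subset ?_
  rintro γ ⟨h | h, hc⟩
  · exact Or.inl ⟨h, hc⟩
  · exact Or.inr ⟨h, hc⟩

lemma NovSet.singleton (a : ℝ) : NovSet {a} :=
  fun c => (Set.finite_singleton a).subset (fun γ hγ => hγ.1)

lemma Pn.zero : Pn (0 : HahnSeries ℝᵒᵈ k) := by
  refine NovSet.subset ?_ (NovSet.singleton 0)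
  intro γ hγ
  simp [hsupp] at hγ

lemma Pn.single (a : ℝᵒᵈ) (r : k) : Pn (HahnSeries.single a r) := by
  refine NovSet.subset ?_ (NovSet.singleton (OrderDual.ofDual a))
  intro γ hγ
  simp only [hsupp, Set.mem_setOf_eq] at hγ
  by_contra h
  refine hγ (HahnSeries.coeff_single_of_ne ?_)
  intro he
  exact h (by simp [← he])

lemma Pn.one : Pn (1 : HahnSeries ℝᵒᵈ k) := by
  have : (1 : HahnSeries ℝᵒᵈ k) = HahnSeries.single 0 1 := rfl
  rw [this]
  exact Pn.single 0 1

lemma Pn.add {x y : HahnSeries ℝᵒᵈ k} (hx : Pn x) (hy : Pn y) : Pn (x + y) := by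
  refine NovSet.subset ?_ (hx.union hy)
  intro γ hγ
  simp only [hsupp, Set.mem_setOf_eq, HahnSeries.coeff_add] at hγ ⊢
  by_contra h
  rw [Set.mem_union] at h
  simp only [Set.mem_union, Set.mem_setOf_eq] at h
  push_neg at h
  rw [h.1, h.2, add_zero] at hγ
  exact hγ rfl

lemma Pn.neg {x : HahnSeries ℝᵒᵈ k} (hx : Pn x) : Pn (-x) := by
  refine NovSet.subset ?_ hx
  intro γ hγ
  simp only [hsupp, Set.mem_setOf_eq, HahnSeries.coeff_neg] at hγ ⊢
  simpa using hγ

lemma Pn.mul {x y : HahnSeries ℝᵒᵈ k} (hx : Pn x) (hy : Pn y) : Pn (x * y) := by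
  refine NovSet.subset ?_ (NovSet.add hx hy)
  intro γ hγ
  have hmem : OrderDual.toDual γ ∈ (x * y).support := hγ
  obtain ⟨a, ha, b, hb, hab⟩ := HahnSeries.support_mul_subset hmem
  exact ⟨OrderDual.ofDual a, ha, OrderDual.ofDual b, hb, hab⟩

lemma Pn.pow {x : HahnSeries ℝᵒᵈ k} (hx : Pn x) : ∀ n : ℕ, Pn (x ^ n)
  | 0 => by rw [pow_zero]; exact Pn.one
  | n + 1 => by rw [pow_succ]; exact (Pn.pow hx n).mul hx

lemma hsupp_one_subset : hsupp (1 : HahnSeries ℝᵒᵈ k) ⊆ {0} := by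
  intro γ hγ
  simp only [hsupp, Set.mem_setOf_eq, HahnSeries.coeff_one] at hγ
  by_contra h
  rw [if_neg (fun he : OrderDual.toDual γ = 0 => h (by simpa using he))] at hγ
  exact hγ rfl

lemma pow_hsupp_bound {y : HahnSeries ℝᵒᵈ k} {ε : ℝ}
    (hε : ∀ γ ∈ hsupp y, γ ≤ -ε) :
    ∀ n : ℕ, ∀ γ ∈ hsupp (y ^ n), γ ≤ -((n : ℝ) * ε)
  | 0 => by
    intro γ hγ
    rw [pow_zero] at hγ
    have := hsupp_one_subset hγ
    simp only [Set.mem_singleton_iff] at this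
    simp [this]
  | n + 1 => by
    intro γ hγ
    rw [pow_succ] at hγ
    have hmem : OrderDual.toDual γ ∈ (y ^ n * y).support := hγ
    obtain ⟨a, ha, b, hb, hab⟩ := HahnSeries.support_mul_subset hmem
    have h1 : OrderDual.ofDual a ≤ -((n : ℝ) * ε) :=
      pow_hsupp_bound hε n (OrderDual.ofDual a) ha
    have h2 : OrderDual.ofDual b ≤ -ε := hε _ hb
    have : OrderDual.ofDual a + OrderDual.ofDual b = γ := hab
    push_cast
    linarith

lemma Pn.hsum_powers {y : HahnSeries ℝᵒᵈ k} (hy : Pn y)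
    (hpos : 0 < y.orderTop) :
    Pn (HahnSeries.SummableFamily.powers y).hsum := by
  have hneg : ∀ γ ∈ hsupp y, γ < 0 := by
    intro γ hγ
    have h1 : y.orderTop ≤ ((OrderDual.toDual γ : ℝᵒᵈ) : WithTop ℝᵒᵈ) :=
      HahnSeries.orderTop_le_of_coeff_ne_zero hγ
    have h2 : (0 : WithTop ℝᵒᵈ) < ((OrderDual.toDual γ : ℝᵒᵈ) : WithTop ℝᵒᵈ) :=
      lt_of_lt_of_le hpos h1
    have h3 : (0 : ℝᵒᵈ) < OrderDual.toDual γ := by exact_mod_cast h2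
    exact h3
  obtain ⟨ε, hε, hbound⟩ := hy.exists_eps hneg
  intro c
  set N : ℕ := ⌈-c / ε⌉₊ + 1 with hN
  refine (Set.Finite.biUnion (Finset.range N).finite_toSet
    (fun n _ => (hy.pow n) c)).subset ?_
  rintro γ ⟨hγ, hc⟩
  have hne : ∃ n : ℕ, (y ^ n).coeff (OrderDual.toDual γ) ≠ 0 := by
    by_contra h
    push_neg at h
    refine hγ ?_
    rw [HahnSeries.SummableFamily.coeff_hsum]
    refine finsum_eq_zero_of_forall_eq_zero (fun n => ?_)
    simpa [hpos] using h n
  obtain ⟨n, hn⟩ := hne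
  have hγn : γ ∈ hsupp (y ^ n) := hn
  have hb := pow_hsupp_bound hbound n γ hγn
  have hnN : n ∈ Finset.range N := by
    rw [Finset.mem_range, hN]
    have h1 : (n : ℝ) * ε < -c := by linarith
    have h2 : (n : ℝ) < -c / ε := by
      rw [lt_div_iff₀ hε]; linarith
    have h3 : (n : ℝ) < (⌈-c / ε⌉₊ : ℝ) + 1 := lt_of_lt_of_le h2 (by
      have := Nat.le_ceil (-c / ε); linarith)
    exact_mod_cast h3
  exact Set.mem_biUnion hnN ⟨hγn, hc⟩

lemma Pn.inv {x : HahnSeries ℝᵒᵈ k} (hx : Pn x) : Pn x⁻¹ := by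
  by_cases hx0 : x = 0
  · rw [hx0, inv_zero]; exact Pn.zero
  · have hr : x.leadingCoeff⁻¹ * x.leadingCoeff = 1 :=
      inv_mul_cancel₀ (HahnSeries.leadingCoeff_ne_zero.mpr hx0)
    have hy := HahnSeries.unit_aux x hr (-x.order) (neg_add_cancel x.order)
    set u : HahnSeries ℝᵒᵈ k := HahnSeries.single (-x.order) x.leadingCoeff⁻¹ with hu
    have hPy : Pn (1 - u * x) := by
      rw [sub_eq_add_neg]
      exact Pn.one.add ((Pn.single _ _).mul hx).neg
    have hw := hPy.hsum_powers hy
    have hinv : x⁻¹ = u * (HahnSeries.SummableFamily.powers (1 - u * x)).hsum := by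
      refine inv_eq_of_mul_eq_one_right ?_
      have h1 := HahnSeries.SummableFamily.one_sub_self_mul_hsum_powers hy
      have h2 : (1 : HahnSeries ℝᵒᵈ k) - (1 - u * x) = u * x := sub_sub_cancel 1 (u * x)
      calc x * (u * (HahnSeries.SummableFamily.powers (1 - u * x)).hsum)
          = (1 - (1 - u * x)) * (HahnSeries.SummableFamily.powers (1 - u * x)).hsum := by
            rw [h2]; ring
        _ = 1 := h1
    rw [hinv]
    exact (Pn.single _ _).mul hw

/-- The Novikov subfield of the Hahn series field. -/
noncomputable def novSubfield (k : Type) [Field k] : Subfield (HahnSeries ℝᵒᵈ k) where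
  carrier := {x | Pn x}
  mul_mem' := fun ha hb => ha.mul hb
  one_mem' := Pn.one
  add_mem' := fun ha hb => ha.add hb
  zero_mem' := Pn.zero
  neg_mem' := fun ha => ha.neg
  inv_mem' := fun _ ha => ha.inv

/-- The embedding of a Novikov series as a Hahn series over `ℝᵒᵈ`. -/
def toHahn (x : Nov k) : HahnSeries ℝᵒᵈ k :=
  ⟨fun γ => x.1 (OrderDual.ofDual γ), NovSet.isPWO (s := {γ : ℝ | x.1 γ ≠ 0}) x.2⟩

def novEquiv (k : Type) [Field k] : Nov k ≃ novSubfield k where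
  toFun x := ⟨toHahn x, (x.2 : NovSet {γ : ℝ | x.1 γ ≠ 0})⟩
  invFun z := ⟨fun γ => z.1.coeff (OrderDual.toDual γ), z.2⟩
  left_inv x := rfl
  right_inv z := rfl

/-- **Novikov ring over a field is a field.**  Let `k` be a field.  Then the
Novikov ring `Nov_k` is a field: there is a field structure on `Nov k` whose
addition is pointwise, whose multiplication is convolution
`(x·y)(γ) = Σ_{γ₁+γ₂=γ} x(γ₁)·y(γ₂)`, and whose unit is the indicator
function of `0 ∈ ℝ`. -/
theorem novikov_ring_over_field_is_field (k : Type) [Field k] :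
    ∃ F : Field (Nov k),
      letI : Field (Nov k) := F
      (∀ x y : Nov k, (x + y).1 = fun γ => x.1 γ + y.1 γ) ∧
      (∀ (x y : Nov k) (γ : ℝ),
        (x * y).1 γ = ∑ᶠ (p : ℝ × ℝ) (_ : p.1 + p.2 = γ), x.1 p.1 * y.1 p.2) ∧
      ((1 : Nov k).1 = fun γ => if γ = 0 then (1 : k) else 0) ∧
      ((0 : Nov k).1 = fun _ => (0 : k)) := by
  classical
  refine ⟨(novEquiv k).field, ?_, ?_, ?_, ?_⟩
  · intro x y
    rfl
  · intro x y γ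
    show (toHahn x * toHahn y).coeff (OrderDual.toDual γ) = _
    rw [HahnSeries.coeff_mul]
    set f : ℝ × ℝ → k := fun p => x.1 p.1 * y.1 p.2 with hfdef
    set s : Set (ℝ × ℝ) := {p | p.1 + p.2 = γ} with hsdef
    obtain ⟨Mx, hMx⟩ := NovSet.bddAbove (x.2 : NovSet {a : ℝ | x.1 a ≠ 0})
    obtain ⟨My, hMy⟩ := NovSet.bddAbove (y.2 : NovSet {a : ℝ | y.1 a ≠ 0})
    have hfin : (s ∩ Function.support f).Finite := by
      refine ((x.2 (γ - My - 1)).prod (y.2 (γ - Mx - 1))).subset ?_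
      rintro ⟨a, b⟩ ⟨hab, hne⟩
      have hab' : a + b = γ := hab
      have h1 : x.1 a ≠ 0 := fun h => hne (by simp [hfdef, Function.mem_support, h])
      have h2 : y.1 b ≠ 0 := fun h => hne (by simp [hfdef, Function.mem_support, h])
      have ha' : a ≤ Mx := hMx h1
      have hb' : b ≤ My := hMy h2
      exact ⟨⟨h1, by simp only; linarith⟩, ⟨h2, by simp only; linarith⟩⟩
    have hR : ∑ᶠ (p : ℝ × ℝ) (_ : p.1 + p.2 = γ), x.1 p.1 * y.1 p.2
        = ∑ p ∈ hfin.toFinset, f p := finsum_mem_eq_sum f hfin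
    rw [hR]
    refine Finset.sum_nbij' (i := fun q : ℝᵒᵈ × ℝᵒᵈ => (OrderDual.ofDual q.1, OrderDual.ofDual q.2))
      (j := fun p : ℝ × ℝ => (OrderDual.toDual p.1, OrderDual.toDual p.2)) ?_ ?_ ?_ ?_ ?_
    · intro q hq
      rw [Finset.mem_addAntidiagonal] at hq
      obtain ⟨h1, h2, h3⟩ := hq
      rw [Set.Finite.mem_toFinset]
      refine ⟨h3, mul_ne_zero h1 h2⟩
    · intro p hp
      rw [Set.Finite.mem_toFinset] at hp
      obtain ⟨h3, hne⟩ := hp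
      rw [Finset.mem_addAntidiagonal]
      obtain ⟨h1, h2⟩ := mul_ne_zero_iff.mp hne
      exact ⟨h1, h2, h3⟩
    · intro q _
      rfl
    · intro p _
      rfl
    · intro q _
      rfl
  · funext γ
    show (1 : HahnSeries ℝᵒᵈ k).coeff (OrderDual.toDual γ) = _
    rw [HahnSeries.coeff_one]
    by_cases h : γ = 0
    · rw [if_pos h, if_pos (by simp [h])]
    · rw [if_neg h, if_neg (fun he : OrderDual.toDual γ = 0 => h (by simpa using he))]
  · rfl
end

section
/- The Novikov ring Nov = Nov_ℤ with integer coefficients is a principal ideal domain. -/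
noncomputable section

namespace NovPID

open HahnSeries Pointwise

/-- Mirrored Novikov condition on sets: finitely many elements below any threshold. -/
def NovB (S : Set ℝ) : Prop := ∀ c : ℝ, {γ ∈ S | γ < c}.Finite

theorem NovB.mono {S T : Set ℝ} (hT : NovB T) (h : S ⊆ T) : NovB S :=
  fun c => (hT c).subset (fun γ hγ => ⟨h hγ.1, hγ.2⟩)

theorem NovB.of_finite {S : Set ℝ} (h : S.Finite) : NovB S :=
  fun _ => h.subset (fun _ hγ => hγ.1)

theorem NovB.union {S T : Set ℝ} (hS : NovB S) (hT : NovB T) : NovB (S ∪ T) := by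
  intro c
  refine ((hS c).union (hT c)).subset ?_
  rintro γ ⟨hγ | hγ, hc⟩
  · exact Or.inl ⟨hγ, hc⟩
  · exact Or.inr ⟨hγ, hc⟩

theorem NovB.exists_min {S : Set ℝ} (hS : NovB S) (hne : S.Nonempty) :
    ∃ m ∈ S, ∀ s ∈ S, m ≤ s := by
  obtain ⟨s₀, hs₀⟩ := hne
  have hfin : ({γ ∈ S | γ < s₀ + 1}).Finite := hS (s₀ + 1)
  have hne' : ({γ ∈ S | γ < s₀ + 1}).Nonempty := ⟨s₀, hs₀, by linarith⟩
  obtain ⟨m, hm, hmin⟩ := Set.Finite.exists_minimalFor id _ hfin hne'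
  refine ⟨m, hm.1, fun s hs => ?_⟩
  by_contra hlt
  push_neg at hlt
  have hsmem : s ∈ {γ ∈ S | γ < s₀ + 1} := ⟨hs, lt_trans hlt hm.2⟩
  have := hmin hsmem (le_of_lt hlt)
  simp only [id] at this
  exact absurd this (not_le.mpr hlt)

theorem NovB.add {S T : Set ℝ} (hS : NovB S) (hT : NovB T) : NovB (S + T) := by
  rcases Set.eq_empty_or_nonempty S with rfl | hSne
  · simpa using NovB.of_finite (Set.finite_empty)
  rcases Set.eq_empty_or_nonempty T with rfl | hTne
  · simpa using NovB.of_finite (Set.finite_empty)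
  obtain ⟨α, hαS, hα⟩ := hS.exists_min hSne
  obtain ⟨β, hβT, hβ⟩ := hT.exists_min hTne
  intro c
  have : {γ ∈ S + T | γ < c} ⊆
      (fun p : ℝ × ℝ => p.1 + p.2) '' (({γ ∈ S | γ < c - β} ×ˢ {γ ∈ T | γ < c - α})) := by
    rintro γ ⟨⟨s, hs, t, ht, rfl⟩, hc⟩
    simp only at hc
    exact ⟨(s, t), ⟨⟨hs, by have := hβ t ht; linarith⟩, ⟨ht, by have := hα s hs; linarith⟩⟩, rfl⟩
  exact (((hS (c - β)).prod (hT (c - α))).image _).subset this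

theorem NovB.isPWO {S : Set ℝ} (hS : NovB S) : S.IsPWO := by
  refine Set.IsWF.isPWO ?_
  rw [Set.isWF_iff_no_descending_seq]
  intro f hf hmem
  have hinj : Function.Injective (fun n : ℕ => f (n + 1)) :=
    fun a b hab => by simpa using hf.injective hab
  have hmem' : ∀ n : ℕ, f (n + 1) ∈ {γ ∈ S | γ < f 0} :=
    fun n => ⟨hmem _, hf (Nat.succ_pos n)⟩
  exact (Set.infinite_of_injective_forall_mem hinj hmem') (hS (f 0))
  

abbrev H : Type := HahnSeries ℝ ℤ

/-- The Novikov subring of the Hahn series ring (with mirrored exponents). -/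
def NovS : Subring H where
  carrier := {f | NovB f.support}
  zero_mem' := by simpa [HahnSeries.support_zero] using NovB.of_finite (Set.finite_empty)
  one_mem' := NovB.of_finite (by rw [HahnSeries.support_one]; exact Set.finite_singleton 0)
  add_mem' := fun {a b} ha hb => (ha.union hb).mono (HahnSeries.support_add_subset _ _)
  neg_mem' := fun {a} ha => by simpa [HahnSeries.support_neg] using ha
  mul_mem' := fun {a b} ha hb => (ha.add hb).mono HahnSeries.support_mul_subset

theorem mem_NovS {f : H} : f ∈ NovS ↔ NovB f.support := Iff.rfl

theorem novB_neg_of_novCond {x : ℝ → ℤ} (hx : NovCond ℤ x) :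
    NovB (Function.support fun γ => x (-γ)) := by
  intro c
  have : {γ ∈ Function.support fun γ => x (-γ) | γ < c} =
      (fun γ : ℝ => -γ) ⁻¹' {δ : ℝ | x δ ≠ 0 ∧ -c < δ} := by
    ext γ
    simp only [Set.mem_setOf_eq, Set.mem_preimage, Function.mem_support]
    constructor
    · rintro ⟨h1, h2⟩; exact ⟨h1, by linarith⟩
    · rintro ⟨h1, h2⟩; exact ⟨h1, by linarith⟩
  rw [this]
  exact (hx (-c)).preimage (neg_injective.injOn)

theorem novCond_of_hahn (f : H) (hf : f ∈ NovS) : NovCond ℤ (fun γ => f.coeff (-γ)) := by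
  intro c
  have : {γ : ℝ | f.coeff (-γ) ≠ 0 ∧ c < γ} =
      (fun γ : ℝ => -γ) ⁻¹' {δ ∈ f.support | δ < -c} := by
    ext γ
    simp only [Set.mem_setOf_eq, Set.mem_preimage, HahnSeries.mem_support]
    constructor
    · rintro ⟨h1, h2⟩; exact ⟨h1, by linarith⟩
    · rintro ⟨h1, h2⟩; exact ⟨h1, by linarith⟩
  rw [this]
  exact (hf (-c)).preimage (neg_injective.injOn)

/-- The equivalence between `Nov ℤ` and the Novikov subring of Hahn series. -/
def e : Nov ℤ ≃ ↥NovS where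
  toFun x := ⟨⟨fun γ => x.1 (-γ), (novB_neg_of_novCond x.2).isPWO⟩, novB_neg_of_novCond x.2⟩
  invFun f := ⟨fun γ => f.1.coeff (-γ), novCond_of_hahn f.1 f.2⟩
  left_inv x := Subtype.ext (funext fun γ => by simp)
  right_inv f := Subtype.ext (HahnSeries.ext (funext fun γ => by simp))

instance : CommRing (Nov ℤ) := e.commRing

/-- `e` as a ring equivalence. -/
def e' : Nov ℤ ≃+* ↥NovS :=
  { e with
    map_mul' := fun x y => e.apply_symm_apply _
    map_add' := fun x y => e.apply_symm_apply _ }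

theorem coe_e' (x : Nov ℤ) : (e' x : H).coeff = fun γ => x.1 (-γ) := rfl

instance : IsDomain (Nov ℤ) := MulEquiv.isDomain _ e'.toMulEquiv

theorem nov_coe (x : Nov ℤ) (γ : ℝ) : x.1 γ = (e' x : H).coeff (-γ) := by
  show x.1 γ = x.1 (- -γ); rw [neg_neg]

theorem nov_add (x y : Nov ℤ) : (x + y).1 = fun γ => x.1 γ + y.1 γ := by
  funext γ
  rw [nov_coe, nov_coe, nov_coe, RingEquiv.map_add]
  simp [HahnSeries.coeff_add]

theorem nov_zero : (0 : Nov ℤ).1 = fun _ => (0 : ℤ) := by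
  funext γ
  show ((0 : H)).coeff (-γ) = 0
  simp

theorem nov_one : (1 : Nov ℤ).1 = fun γ => if γ = 0 then (1 : ℤ) else 0 := by
  funext γ
  show ((1 : H)).coeff (-γ) = _
  rw [HahnSeries.coeff_one]
  simp [neg_eq_zero]

end NovPID

namespace NovPID

open Classical in
theorem nov_mul (x y : Nov ℤ) (γ : ℝ) :
    (x * y).1 γ = ∑ᶠ (p : ℝ × ℝ) (_ : p.1 + p.2 = γ), x.1 p.1 * y.1 p.2 := by
  classical
  set fx := (e' x : H) with hfx
  set fy := (e' y : H) with hfy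
  have hmul : (x * y).1 γ =
      ∑ ij ∈ Finset.antidiagonal fx.isPWO_support fy.isPWO_support (-γ),
        fx.coeff ij.1 * fy.coeff ij.2 := by
    rw [nov_coe, RingEquiv.map_mul]
    exact HahnSeries.coeff_mul
  set s : Finset (ℝ × ℝ) :=
    (Finset.antidiagonal fx.isPWO_support fy.isPWO_support (-γ)).image
      (fun p : ℝ × ℝ => (-p.1, -p.2)) with hs
  have key : ∀ p : ℝ × ℝ, (∑ᶠ _ : p.1 + p.2 = γ, x.1 p.1 * y.1 p.2) =
      if p.1 + p.2 = γ then x.1 p.1 * y.1 p.2 else 0 := fun p => finsum_eq_if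
  rw [finsum_congr key]
  have hsupp : (Function.support fun p : ℝ × ℝ =>
      if p.1 + p.2 = γ then x.1 p.1 * y.1 p.2 else 0) ⊆ ↑s := by
    intro p hp
    simp only [Function.mem_support, ne_eq, ite_eq_right_iff, not_forall] at hp
    obtain ⟨hpγ, hp0⟩ := hp
    have hx0 : x.1 p.1 ≠ 0 := fun h => hp0 (by rw [h, zero_mul])
    have hy0 : y.1 p.2 ≠ 0 := fun h => hp0 (by rw [h, mul_zero])
    simp only [hs, Finset.coe_image, Set.mem_image, Finset.mem_coe,
      Finset.mem_antidiagonal]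
    refine ⟨(-p.1, -p.2), ⟨?_, ?_, show -p.1 + -p.2 = -γ by linarith⟩, by simp⟩
    · show fx.coeff (-p.1) ≠ 0
      rw [hfx, coe_e']; simpa using hx0
    · show fy.coeff (-p.2) ≠ 0
      rw [hfy, coe_e']; simpa using hy0
  rw [finsum_eq_sum_of_support_subset _ hsupp, hmul, hs,
    Finset.sum_image (fun p _ q _ h => by
      simpa [Prod.ext_iff, neg_inj] using h)]
  refine Finset.sum_congr rfl ?_
  intro p hp
  rw [Finset.mem_antidiagonal] at hp
  have : -p.1 + -p.2 = γ := by linarith [hp.2.2]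
  rw [if_pos this]
  have c1 : fx.coeff p.1 = x.1 (-p.1) := by rw [hfx, coe_e']
  have c2 : fy.coeff p.2 = y.1 (-p.2) := by rw [hfy, coe_e']
  rw [c1, c2]

end NovPID

theorem HahnSeries.coeff_order_ne_zero {f : NovPID.H} (hf : f ≠ 0) : f.coeff f.order ≠ 0 :=
  fun h => hf (HahnSeries.coeff_order_eq_zero.mp h)

namespace NovPID

/-! ### Leading coefficients and monomials -/

/-- Leading coefficient: coefficient at the order. -/
def lc (f : H) : ℤ := f.coeff f.order

@[simp] theorem lc_zero : lc (0 : H) = 0 := by simp [lc]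

theorem lc_ne_zero {f : H} (hf : f ≠ 0) : lc f ≠ 0 := HahnSeries.coeff_order_ne_zero hf

/-- Monomials as elements of the Novikov subring. -/
def sing (d : ℝ) (c : ℤ) : ↥NovS :=
  ⟨HahnSeries.single d c,
    (NovB.of_finite (Set.finite_singleton d)).mono HahnSeries.support_single_subset⟩

@[simp] theorem coe_sing (d : ℝ) (c : ℤ) : ((sing d c : ↥NovS) : H) = HahnSeries.single d c := rfl

theorem single_mul_coeff_eq_zero {d : ℝ} {u : ℤ} {f : H} {γ : ℝ}
    (h : γ < d + f.order) : (HahnSeries.single d u * f).coeff γ = 0 := by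
  by_contra h0
  obtain ⟨i, hi, j, hj, rfl⟩ := HahnSeries.support_mul_subset
    ((HahnSeries.mem_support _ _).2 h0)
  have hid : i = d := HahnSeries.support_single_subset hi
  have hjo : f.order ≤ j := HahnSeries.order_le_of_coeff_ne_zero hj
  rw [hid] at h
  have h' : d + j < d + f.order := h
  linarith

theorem order_nonneg_coeff_zero {w : H} (h0 : ∀ γ : ℝ, γ < 0 → w.coeff γ = 0)
    (hw : w ≠ 0) : w.order = 0 ∨ 0 < w.order := by
  rcases lt_trichotomy w.order 0 with h | h | h
  · exact absurd (h0 _ h) (HahnSeries.coeff_order_ne_zero hw)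
  · exact Or.inl h
  · exact Or.inr h

/-! ### The gcd argument: `lc x` minimal over the ideal divides every `lc` -/

theorem dvd_lc (I : Ideal ↥NovS) (x : ↥NovS) (hxI : x ∈ I) (hx0 : (x : H) ≠ 0)
    (hmin : ∀ z : ↥NovS, z ∈ I → (z : H) ≠ 0 →
      (lc (x : H)).natAbs ≤ (lc (z : H)).natAbs) :
    ∀ z : ↥NovS, z ∈ I → lc (x : H) ∣ lc (z : H) := by
  intro z hzI
  by_cases hz0 : (z : H) = 0
  · rw [hz0, lc_zero]; exact dvd_zero _
  set a : ℤ := lc (x : H) with ha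
  set b : ℤ := lc (z : H) with hb
  set u : ℤ := Int.gcdA a b with hu
  set v : ℤ := Int.gcdB a b with hv
  set g : ℕ := Int.gcd a b with hg
  have hgab : (g : ℤ) = a * u + b * v := Int.gcd_eq_gcd_ab a b
  set w : ↥NovS := sing (-(x : H).order) u * x + sing (-(z : H).order) v * z with hw
  have hwI : w ∈ I := I.add_mem (I.mul_mem_left _ hxI) (I.mul_mem_left _ hzI)
  have hwcoe : (w : H) = HahnSeries.single (-(x : H).order) u * (x : H)
      + HahnSeries.single (-(z : H).order) v * (z : H) := by
    push_cast [hw]; rfl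
  have hcoeff1 : (HahnSeries.single (-(x : H).order) u * (x : H)).coeff 0 = u * a := by
    have h00 : (0 : ℝ) = (x : H).order + -(x : H).order := by ring
    rw [h00, HahnSeries.coeff_single_mul_add]
    rfl
  have hcoeff2 : (HahnSeries.single (-(z : H).order) v * (z : H)).coeff 0 = v * b := by
    have h00 : (0 : ℝ) = (z : H).order + -(z : H).order := by ring
    rw [h00, HahnSeries.coeff_single_mul_add]
    rfl
  have hc0 : (w : H).coeff 0 = (g : ℤ) := by
    rw [hwcoe, HahnSeries.coeff_add, hcoeff1, hcoeff2, hgab]; ring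
  have hcneg : ∀ γ : ℝ, γ < 0 → (w : H).coeff γ = 0 := by
    intro γ hγ
    have hx' : γ < -(x : H).order + (x : H).order := by linarith
    have hz' : γ < -(z : H).order + (z : H).order := by linarith
    rw [hwcoe, HahnSeries.coeff_add, single_mul_coeff_eq_zero hx',
      single_mul_coeff_eq_zero hz', add_zero]
  have hgpos : 0 < g := Int.gcd_pos_of_ne_zero_left b (lc_ne_zero hx0)
  have hg0 : ((g : ℤ)) ≠ 0 := by exact_mod_cast hgpos.ne'
  have hw0 : (w : H) ≠ 0 := HahnSeries.ne_zero_of_coeff_ne_zero (hc0 ▸ hg0)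
  have horder : (w : H).order = 0 := by
    rcases order_nonneg_coeff_zero hcneg hw0 with h | h
    · exact h
    · exact absurd (HahnSeries.coeff_eq_zero_of_lt_order h) (hc0 ▸ hg0)
  have hlcw : lc (w : H) = (g : ℤ) := by rw [lc, horder, hc0]
  have hle : a.natAbs ≤ g := by
    have := hmin w hwI hw0
    rwa [hlcw, Int.natAbs_natCast] at this
  have hdvd : g ∣ a.natAbs := by
    have h1 : ((g : ℤ)) ∣ a := Int.gcd_dvd_left _ _
    have := Int.natAbs_dvd_natAbs.mpr h1
    simpa using this
  have haa : a.natAbs ≠ 0 := Int.natAbs_ne_zero.mpr (lc_ne_zero hx0)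
  have heq : g = a.natAbs := le_antisymm (Nat.le_of_dvd (Nat.pos_of_ne_zero haa) hdvd) hle
  have h2 : ((a.natAbs : ℤ)) ∣ b := by
    rw [← heq]
    exact Int.gcd_dvd_right _ _
  exact Int.natAbs_dvd.mp h2

end NovPID

namespace NovPID

/-! ### Finiteness of bounded sums from the additive monoid generated by a Novikov set -/

theorem finite_listSums (F : Set ℝ) (hF : F.Finite) :
    ∀ K : ℕ, {x : ℝ | ∃ l : List ℝ, (∀ y ∈ l, y ∈ F) ∧ l.length ≤ K ∧ l.sum = x}.Finite := by
  intro K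
  induction K with
  | zero =>
    refine (Set.finite_singleton 0).subset ?_
    rintro x ⟨l, _, hlen, rfl⟩
    have : l = [] := List.length_eq_zero_iff.mp (Nat.le_zero.mp hlen)
    simp [this]
  | succ K ih =>
    refine (ih.union (hF.image2 (f := fun a b => a + b) ih)).subset ?_
    rintro x ⟨l, hmem, hlen, rfl⟩
    cases l with
    | nil => exact Or.inl ⟨[], by simp⟩
    | cons a t =>
      refine Or.inr ⟨a, hmem a (by simp), t.sum, ⟨t, fun y hy => hmem y (by simp [hy]),
        by simpa using Nat.succ_le_succ_iff.mp hlen, rfl⟩, by simp⟩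

theorem mem_le_sum {l : List ℝ} (hpos : ∀ f ∈ l, (0:ℝ) ≤ f) {e : ℝ} (he : e ∈ l) :
    e ≤ l.sum := by
  have hperm := List.perm_cons_erase he
  rw [hperm.sum_eq, List.sum_cons]
  have : (0:ℝ) ≤ (l.erase e).sum :=
    List.sum_nonneg (fun f hf => hpos f (List.erase_subset hf))
  linarith

theorem exists_nonzero_list {S : Set ℝ} :
    ∀ l : List ℝ, (∀ e ∈ l, e ∈ S) →
      ∃ l' : List ℝ, (∀ e ∈ l', e ∈ S ∧ e ≠ 0) ∧ l'.sum = l.sum ∧ ∀ e ∈ l', e ∈ l := by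
  intro l
  induction l with
  | nil => exact fun _ => ⟨[], by simp⟩
  | cons a t ih =>
    intro hmem
    obtain ⟨l', hl', hsum, hsub⟩ := ih (fun e he => hmem e (by simp [he]))
    by_cases ha : a = 0
    · exact ⟨l', hl', by simp [hsum, ha], fun e he => by simp [hsub e he]⟩
    · refine ⟨a :: l', ?_, by simp [hsum], ?_⟩
      · intro e he
        rcases List.mem_cons.mp he with rfl | he'
        · exact ⟨hmem _ (by simp), ha⟩
        · exact hl' e he'
      · intro e he
        rcases List.mem_cons.mp he with rfl | he'
        · simp
        · simp [hsub e he']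

theorem novB_closure {S : Set ℝ} (hS : NovB S) (h0 : ∀ s ∈ S, 0 ≤ s) :
    NovB ((AddSubmonoid.closure S : AddSubmonoid ℝ) : Set ℝ) := by
  intro c
  -- nonzero entries below `c`
  set F : Set ℝ := {s ∈ S | s < c ∧ s ≠ 0} with hF
  have hFfin : F.Finite := (hS c).subset (fun s hs => ⟨hs.1, hs.2.1⟩)
  rcases Set.eq_empty_or_nonempty F with hFe | hFne
  · -- all elements below c in the closure are 0
    refine (Set.finite_singleton 0).subset ?_
    rintro m ⟨hm, hmc⟩
    obtain ⟨l, hlS, rfl⟩ := AddSubmonoid.exists_list_of_mem_closure hm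
    obtain ⟨l', hl', hsum, _⟩ := exists_nonzero_list l hlS
    have : l' = [] := by
      by_contra hne
      obtain ⟨e, he⟩ := List.exists_mem_of_ne_nil l' hne
      have heS := hl' e he
      have hle : e ≤ l'.sum := mem_le_sum (fun f hf => h0 f (hl' f hf).1) he
      have : e ∈ F := ⟨heS.1, by rw [hsum] at hle; linarith, heS.2⟩
      rw [hFe] at this
      exact this
    rw [← hsum, this]
    simp
  · obtain ⟨m₀, hm₀F, hm₀min⟩ := (NovB.of_finite hFfin).exists_min hFne
    have hm₀pos : 0 < m₀ := lt_of_le_of_ne (h0 _ hm₀F.1) (Ne.symm hm₀F.2.2)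
    set K : ℕ := ⌈c / m₀⌉₊ with hK
    refine ((finite_listSums F hFfin K).union (Set.finite_singleton 0)).subset ?_
    rintro m ⟨hm, hmc⟩
    obtain ⟨l, hlS, rfl⟩ := AddSubmonoid.exists_list_of_mem_closure hm
    obtain ⟨l', hl', hsum, _⟩ := exists_nonzero_list l hlS
    -- entries of l' lie in F
    have hentF : ∀ e ∈ l', e ∈ F := by
      intro e he
      have heS := hl' e he
      have hle : e ≤ l'.sum := mem_le_sum (fun f hf => h0 f (hl' f hf).1) he
      exact ⟨heS.1, by rw [hsum] at hle; linarith, heS.2⟩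
    -- length bound
    have hlen : l'.length ≤ K := by
      have hsmall : (l'.length : ℝ) * m₀ ≤ l'.sum := by
        have := List.card_nsmul_le_sum l' m₀ (fun e he => hm₀min e (hentF e he))
        simpa [nsmul_eq_mul] using this
      have hlt : (l'.length : ℝ) < c / m₀ := by
        rw [lt_div_iff₀ hm₀pos]
        calc (l'.length : ℝ) * m₀ ≤ l'.sum := hsmall
        _ = l.sum := hsum
        _ < c := hmc
      have := (Nat.le_ceil (c / m₀))
      exact_mod_cast le_of_lt (lt_of_lt_of_le hlt this)
    exact Or.inl ⟨l', hentF, hlen, hsum⟩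

theorem novB_translate {S : Set ℝ} (hS : NovB S) (t : ℝ) :
    NovB ((fun s => s + t) '' S) := by
  intro c
  refine ((hS (c - t)).image (fun s => s + t)).subset ?_
  rintro γ ⟨⟨s, hs, rfl⟩, hγ⟩
  have hγ' : s + t < c := hγ
  exact ⟨s, ⟨hs, by linarith⟩, rfl⟩

end NovPID

namespace NovPID

/-! ### The division sequence -/

variable (x : ↥NovS)

/-- Successive remainders in division of `y` by `x`. -/
def seq (y : ↥NovS) : ℕ → ↥NovS
  | 0 => y
  | n + 1 => seq y n -
      sing ((seq y n : H).order - (x : H).order) (lc ((seq y n : H)) / lc (x : H)) * x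

variable {x}

theorem seq_coe (y : ↥NovS) (n : ℕ) :
    ((seq x y (n + 1) : ↥NovS) : H) = (seq x y n : H) -
      HahnSeries.single ((seq x y n : H).order - (x : H).order)
        (lc ((seq x y n : H)) / lc (x : H)) * (x : H) := by
  show ((seq x y n - sing _ _ * x : ↥NovS) : H) = _
  push_cast
  rfl

theorem seq_zero_succ {y : ↥NovS} {n : ℕ} (h : (seq x y n : H) = 0) :
    (seq x y (n + 1) : H) = 0 := by
  rw [seq_coe, h, lc_zero, Int.zero_ediv, HahnSeries.single_eq_zero, zero_mul, sub_zero]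

theorem seq_zero_of_le {y : ↥NovS} {m n : ℕ} (hmn : m ≤ n) (h : (seq x y m : H) = 0) :
    (seq x y n : H) = 0 := by
  obtain ⟨k, rfl⟩ := Nat.exists_eq_add_of_le hmn
  clear hmn
  induction k with
  | zero => exact h
  | succ k ih => exact seq_zero_succ ih

theorem seq_coeff_succ {y : ↥NovS} {n : ℕ}
    (hd : lc (x : H) ∣ lc ((seq x y n : H))) {γ : ℝ}
    (hγ : γ ≤ (seq x y n : H).order) : (seq x y (n + 1) : H).coeff γ = 0 := by
  by_cases h0 : (seq x y n : H) = 0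
  · rw [seq_zero_succ h0]; simp
  rw [seq_coe, HahnSeries.coeff_sub]
  rcases lt_or_eq_of_le hγ with hlt | rfl
  · rw [HahnSeries.coeff_eq_zero_of_lt_order hlt, single_mul_coeff_eq_zero (by linarith),
      sub_zero]
  · set d := (seq x y n : H).order - (x : H).order with hdd
    have harr : (seq x y n : H).order = (x : H).order + d := by rw [hdd]; ring
    rw [harr, HahnSeries.coeff_single_mul_add, ← harr]
    rw [show ((seq x y n : H)).coeff (seq x y n : H).order = lc ((seq x y n : H)) from rfl,
      show ((x : H)).coeff (x : H).order = lc ((x : H)) from rfl,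
      Int.ediv_mul_cancel hd, sub_self]

theorem seq_ne_zero_of_succ {y : ↥NovS} {n : ℕ} (h : (seq x y (n + 1) : H) ≠ 0) :
    (seq x y n : H) ≠ 0 := fun h0 => h (seq_zero_succ h0)

theorem seq_order_lt {y : ↥NovS} {n : ℕ}
    (hd : lc (x : H) ∣ lc ((seq x y n : H)))
    (h1 : (seq x y (n + 1) : H) ≠ 0) :
    (seq x y n : H).order < (seq x y (n + 1) : H).order := by
  by_contra hle
  push_neg at hle
  exact HahnSeries.coeff_order_ne_zero h1 (seq_coeff_succ hd hle)

theorem seq_order_strict_mono {y : ↥NovS}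
    (hd : ∀ k, lc (x : H) ∣ lc ((seq x y k : H))) :
    ∀ m n : ℕ, m < n → (seq x y n : H) ≠ 0 →
      (seq x y m : H).order < (seq x y n : H).order := by
  intro m n
  induction n with
  | zero => omega
  | succ n ih =>
    intro hmn hne
    rcases Nat.lt_succ_iff_lt_or_eq.mp hmn with h' | rfl
    · exact lt_trans (ih h' (seq_ne_zero_of_succ hne)) (seq_order_lt (hd n) hne)
    · exact seq_order_lt (hd m) hne

theorem seq_mem {I : Ideal ↥NovS} {y : ↥NovS} (hxI : x ∈ I) (hyI : y ∈ I) (n : ℕ) :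
    seq x y n ∈ I := by
  induction n with
  | zero => exact hyI
  | succ n ih => exact I.sub_mem ih (I.mul_mem_left _ hxI)

end NovPID

namespace NovPID

open Pointwise

theorem coeff_finsetSum {β : Type} (s : Finset β) (f : β → H) (g : ℝ) :
    (∑ i ∈ s, f i).coeff g = ∑ i ∈ s, (f i).coeff g := by
  classical
  induction s using Finset.cons_induction with
  | empty => simp
  | cons a s ha ih => rw [Finset.sum_cons, Finset.sum_cons, HahnSeries.coeff_add, ih]

/-! ### Quotient data -/

variable (x y : ↥NovS)

/-- Exponent of the `n`-th quotient monomial. -/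
def dd (n : ℕ) : ℝ := (seq x y n : H).order - (x : H).order

/-- Coefficient of the `n`-th quotient monomial. -/
def cc (n : ℕ) : ℤ := lc ((seq x y n : H)) / lc ((x : H))

theorem seq_coe' (n : ℕ) : (seq x y (n + 1) : H) =
    (seq x y n : H) - HahnSeries.single (dd x y n) (cc x y n) * (x : H) :=
  seq_coe y n

/-- Partial sums of the quotient. -/
def QQ (N : ℕ) : H := ∑ n ∈ Finset.range N, HahnSeries.single (dd x y n) (cc x y n)

theorem seq_invariant (N : ℕ) : (y : H) = QQ x y N * (x : H) + (seq x y N : H) := by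
  induction N with
  | zero => simp [QQ, seq]
  | succ N ih =>
    rw [QQ, Finset.sum_range_succ, ← QQ, seq_coe', add_mul]
    linear_combination ih

variable {x y}

theorem cc_eq_zero {n : ℕ} (h : (seq x y n : H) = 0) : cc x y n = 0 := by
  rw [cc, h, lc_zero, Int.zero_ediv]

theorem cc_ne_zero (hd : lc (x : H) ∣ lc ((seq x y n : H))) (h : (seq x y n : H) ≠ 0) :
    cc x y n ≠ 0 := by
  intro h0
  have := Int.ediv_mul_cancel hd
  rw [cc] at h0
  rw [h0, zero_mul] at this
  exact lc_ne_zero h this.symm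

variable (x y)

/-- The set containing all supports of the remainders. -/
def TT : Set ℝ := ((y : H).support) +
  ((AddSubmonoid.closure ((fun s => s + (-(x : H).order)) '' (x : H).support)
    : AddSubmonoid ℝ) : Set ℝ)

theorem TT_novB (hx0 : (x : H) ≠ 0) : NovB (TT x y) := by
  refine NovB.add y.2 (novB_closure (novB_translate x.2 _) ?_)
  rintro s ⟨s₀, hs₀, rfl⟩
  have : (x : H).order ≤ s₀ := HahnSeries.order_le_of_coeff_ne_zero hs₀
  simp only []
  linarith

theorem seq_supp_TT : ∀ n : ℕ, ((seq x y n : H).support) ⊆ TT x y := by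
  intro n
  induction n with
  | zero =>
    intro γ hγ
    exact Set.mem_add.mpr ⟨γ, hγ, 0, AddSubmonoid.zero_mem _, add_zero γ⟩
  | succ n ih =>
    by_cases h0 : (seq x y n : H) = 0
    · intro γ hγ
      rw [seq_zero_succ h0, HahnSeries.support_zero] at hγ
      exact absurd hγ (Set.notMem_empty γ)
    · intro γ hγ
      have hne : ((seq x y (n + 1) : H)).coeff γ ≠ 0 := hγ
      rw [seq_coe', HahnSeries.coeff_sub] at hne
      by_cases hrn : ((seq x y n : H)).coeff γ ≠ 0
      · exact ih hrn
      · push_neg at hrn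
        rw [hrn, zero_sub, neg_ne_zero] at hne
        obtain ⟨i, hi, j, hj, rfl⟩ := HahnSeries.support_mul_subset
          ((HahnSeries.mem_support _ _).2 hne)
        have hid : i = dd x y n := HahnSeries.support_single_subset hi
        -- order of seq n is in its support, hence in TT
        have horder : (seq x y n : H).order ∈ TT x y :=
          ih (HahnSeries.coeff_order_ne_zero h0)
        obtain ⟨t, ht, m, hm, htm⟩ := Set.mem_add.mp horder
        refine Set.mem_add.mpr ⟨t, ht, m + (j + (-(x : H).order)), ?_, ?_⟩
        · exact AddSubmonoid.add_mem _ hm (AddSubmonoid.subset_closure ⟨j, hj, rfl⟩)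
        · have hij : (fun x1 x2 => x1 + x2) i j = i + j := rfl
          rw [hij, hid, dd, ← htm]
          ring

theorem seq_escape (hx0 : (x : H) ≠ 0)
    (hd : ∀ k, lc (x : H) ∣ lc ((seq x y k : H))) :
    ∀ γ : ℝ, ∃ N, (seq x y N : H) = 0 ∨ γ < (seq x y N : H).order := by
  intro γ
  by_contra hcon
  push_neg at hcon
  have hall : ∀ N, (seq x y N : H) ≠ 0 ∧ (seq x y N : H).order ≤ γ := by
    intro N
    obtain ⟨h1, h2⟩ := hcon N
    exact ⟨h1, h2⟩
  have hmono : StrictMono (fun N => (seq x y N : H).order) := by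
    intro m n hmn
    exact seq_order_strict_mono hd m n hmn (hall n).1
  have hmem : ∀ N, (seq x y N : H).order ∈ {t ∈ TT x y | t < γ + 1} := by
    intro N
    exact ⟨seq_supp_TT x y N (HahnSeries.coeff_order_ne_zero (hall N).1),
      lt_of_le_of_lt (hall N).2 (by linarith)⟩
  exact Set.infinite_of_injective_forall_mem hmono.injective hmem (TT_novB x y hx0 (γ + 1))

end NovPID

namespace NovPID

open Classical in
/-- Coefficient function of the full quotient. -/
noncomputable def qcoeff (x y : ↥NovS) (γ : ℝ) : ℤ :=
  if h : ∃ n, (seq x y n : H) ≠ 0 ∧ dd x y n = γ then cc x y h.choose else 0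

variable {x y : ↥NovS}

theorem dd_uniq (hd : ∀ k, lc (x : H) ∣ lc ((seq x y k : H))) {m n : ℕ}
    (hm : (seq x y m : H) ≠ 0) (hn : (seq x y n : H) ≠ 0)
    (he : dd x y m = dd x y n) : m = n := by
  have horder : (seq x y m : H).order = (seq x y n : H).order := by
    have := congrArg (fun t => t + (x : H).order) he
    simpa [dd, sub_add_cancel] using this
  rcases lt_trichotomy m n with h | h | h
  · exact absurd horder (ne_of_lt (seq_order_strict_mono hd m n h hn))
  · exact h
  · exact absurd horder.symm (ne_of_lt (seq_order_strict_mono hd n m h hm))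

theorem qcoeff_spec (hd : ∀ k, lc (x : H) ∣ lc ((seq x y k : H))) {γ : ℝ} {n : ℕ}
    (hn : (seq x y n : H) ≠ 0) (he : dd x y n = γ) : qcoeff x y γ = cc x y n := by
  classical
  have h : ∃ k, (seq x y k : H) ≠ 0 ∧ dd x y k = γ := ⟨n, hn, he⟩
  rw [qcoeff, dif_pos h]
  obtain ⟨h1, h2⟩ := h.choose_spec
  congr 1
  exact dd_uniq hd h1 hn (h2.trans he.symm)

theorem qcoeff_eq_zero {γ : ℝ} (h : ¬∃ n, (seq x y n : H) ≠ 0 ∧ dd x y n = γ) :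
    qcoeff x y γ = 0 := by
  classical
  rw [qcoeff, dif_neg h]

theorem qcoeff_supp :
    Function.support (qcoeff x y) ⊆ (fun t => t + (-(x : H).order)) '' (TT x y) := by
  classical
  intro γ hγ
  rw [Function.mem_support, qcoeff] at hγ
  split_ifs at hγ with h
  · obtain ⟨h1, h2⟩ := h.choose_spec
    refine ⟨(seq x y h.choose : H).order,
      seq_supp_TT x y _ (HahnSeries.coeff_order_ne_zero h1), ?_⟩
    show (seq x y h.choose : H).order + -(x : H).order = γ
    rw [dd] at h2
    linarith
  · exact absurd rfl hγ

variable (x y)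

/-- The quotient as an element of the Novikov subring. -/
noncomputable def qq (hx0 : (x : H) ≠ 0) : ↥NovS :=
  ⟨⟨qcoeff x y, (((novB_translate (TT_novB x y hx0) (-(x : H).order)).mono
      qcoeff_supp)).isPWO⟩,
    (novB_translate (TT_novB x y hx0) (-(x : H).order)).mono qcoeff_supp⟩

@[simp] theorem qq_coeff (hx0 : (x : H) ≠ 0) (γ : ℝ) :
    ((qq x y hx0 : ↥NovS) : H).coeff γ = qcoeff x y γ := rfl

variable {x y}

theorem qq_sub_QQ (hx0 : (x : H) ≠ 0)
    (hd : ∀ k, lc (x : H) ∣ lc ((seq x y k : H))) (N : ℕ) {γ : ℝ}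
    (hne : ((qq x y hx0 : H) - QQ x y N).coeff γ ≠ 0) :
    ∃ n, N ≤ n ∧ (seq x y n : H) ≠ 0 ∧ dd x y n = γ := by
  classical
  rw [HahnSeries.coeff_sub, qq_coeff, QQ, coeff_finsetSum] at hne
  by_cases h : ∃ n, (seq x y n : H) ≠ 0 ∧ dd x y n = γ
  · obtain ⟨n₀, hn₀, he₀⟩ := h
    by_cases hlt : n₀ < N
    · exfalso
      apply hne
      rw [qcoeff_spec hd hn₀ he₀]
      rw [Finset.sum_eq_single_of_mem n₀ (Finset.mem_range.mpr hlt)]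
      · rw [he₀, HahnSeries.coeff_single_same]
        exact sub_self _
      · intro b _ hbn
        rw [HahnSeries.coeff_single]
        split_ifs with hb
        · by_cases hrb : (seq x y b : H) = 0
          · exact cc_eq_zero hrb
          · exact absurd (dd_uniq hd hrb hn₀ (hb.symm.trans he₀.symm)) hbn
        · rfl
    · exact ⟨n₀, Nat.le_of_not_lt hlt, hn₀, he₀⟩
  · exfalso
    apply hne
    have hsum : (∑ i ∈ Finset.range N, ((HahnSeries.single (dd x y i)) (cc x y i)).coeff γ)
        = 0 := by
      refine Finset.sum_eq_zero ?_
      intro b _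
      rw [HahnSeries.coeff_single]
      split_ifs with hb
      · by_cases hrb : (seq x y b : H) = 0
        · exact cc_eq_zero hrb
        · exact absurd ⟨b, hrb, hb.symm⟩ h
      · rfl
    rw [qcoeff_eq_zero h, hsum, sub_zero]

theorem y_eq_qq_mul (hx0 : (x : H) ≠ 0)
    (hd : ∀ k, lc (x : H) ∣ lc ((seq x y k : H))) :
    (y : H) = (qq x y hx0 : H) * (x : H) := by
  ext γ
  obtain ⟨N, hN⟩ := seq_escape x y hx0 hd γ
  have hdiff : (((qq x y hx0 : H) - QQ x y N) * (x : H)).coeff γ = 0 := by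
    by_contra hne
    obtain ⟨i, hi, j, hj, rfl⟩ := HahnSeries.support_mul_subset
      ((HahnSeries.mem_support _ _).2 hne)
    obtain ⟨n, hNn, hn0, hdn⟩ := qq_sub_QQ hx0 hd N hi
    have hjx : (x : H).order ≤ j := HahnSeries.order_le_of_coeff_ne_zero hj
    have hij : (fun x1 x2 => x1 + x2) i j = i + j := rfl
    -- i + j ≥ order (seq n) ≥ order (seq N) > γ, but i + j = γ
    have h1 : (seq x y N : H).order ≤ (seq x y n : H).order := by
      rcases Nat.lt_or_ge N n with h | h
      · exact le_of_lt (seq_order_strict_mono hd N n h hn0)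
      · have : n = N := le_antisymm (by omega) hNn
        rw [this]
    rcases hN with hz | hγ
    · exact hn0 (seq_zero_of_le hNn hz)
    · have hγ' : i + j < (seq x y N : H).order := hγ
      have h2 : (seq x y n : H).order ≤ i + j := by
        rw [← hdn]
        simp only [dd]
        linarith
      linarith
  have hcalc : ((qq x y hx0 : H) * (x : H)).coeff γ
      = (QQ x y N * (x : H)).coeff γ := by
    have : (qq x y hx0 : H) * (x : H)
        = QQ x y N * (x : H) + ((qq x y hx0 : H) - QQ x y N) * (x : H) := by ring
    rw [this, HahnSeries.coeff_add, hdiff, add_zero]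
  have hrN : ((seq x y N : H)).coeff γ = 0 := by
    rcases hN with hz | hγ
    · rw [hz]; simp
    · exact HahnSeries.coeff_eq_zero_of_lt_order hγ
  rw [hcalc]
  have := seq_invariant x y N
  rw [this, HahnSeries.coeff_add, hrN, add_zero]

end NovPID

namespace NovPID

open Classical in
theorem novS_pid : IsPrincipalIdealRing ↥NovS := by
  refine ⟨fun I => ?_⟩
  by_cases hI : I = ⊥
  · rw [hI]; infer_instance
  · obtain ⟨y₀, hy₀I, hy₀⟩ := (Submodule.ne_bot_iff I).mp hI
    have hy₀' : (y₀ : H) ≠ 0 := fun h => hy₀ (Subtype.ext h)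
    have hP : ∃ k, ∃ z : ↥NovS, z ∈ I ∧ (z : H) ≠ 0 ∧ (lc (z : H)).natAbs = k :=
      ⟨_, y₀, hy₀I, hy₀', rfl⟩
    obtain ⟨x, hxI, hx0, hxk⟩ := Nat.find_spec hP
    have hmin : ∀ z : ↥NovS, z ∈ I → (z : H) ≠ 0 →
        (lc (x : H)).natAbs ≤ (lc (z : H)).natAbs := by
      intro z hz hz0
      rw [hxk]
      exact Nat.find_min' hP ⟨z, hz, hz0, rfl⟩
    have hdvdI := dvd_lc I x hxI hx0 hmin
    refine ⟨⟨x, le_antisymm ?_ ?_⟩⟩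
    · intro y hyI
      have hd : ∀ k, lc (x : H) ∣ lc ((seq x y k : H)) :=
        fun k => hdvdI _ (seq_mem hxI hyI k)
      have hy := y_eq_qq_mul hx0 hd
      exact Ideal.mem_span_singleton'.mpr ⟨qq x y hx0, Subtype.ext hy.symm⟩
    · rw [Submodule.span_le]
      simpa using hxI

instance : IsPrincipalIdealRing (Nov ℤ) := by
  haveI := novS_pid
  exact IsPrincipalIdealRing.of_surjective (e'.symm : ↥NovS ≃+* Nov ℤ) e'.symm.surjective

end NovPID

/-- **The Novikov ring `Nov = Nov_ℤ` is a principal ideal domain.**  There is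
a commutative ring structure on `Nov ℤ` whose addition is pointwise, whose
multiplication is convolution `(x·y)(γ) = Σ_{γ₁+γ₂=γ} x(γ₁)·y(γ₂)` and whose
unit is the indicator function of `0 ∈ ℝ`, and with this structure `Nov ℤ`
is an integral domain in which every ideal is principal. -/
theorem novikov_ring_int_is_PID :
    ∃ R : CommRing (Nov ℤ),
      letI : CommRing (Nov ℤ) := R
      (∀ x y : Nov ℤ, (x + y).1 = fun γ => x.1 γ + y.1 γ) ∧
      (∀ (x y : Nov ℤ) (γ : ℝ),
        (x * y).1 γ = ∑ᶠ (p : ℝ × ℝ) (_ : p.1 + p.2 = γ), x.1 p.1 * y.1 p.2) ∧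
      ((1 : Nov ℤ).1 = fun γ => if γ = 0 then (1 : ℤ) else 0) ∧
      ((0 : Nov ℤ).1 = fun _ => (0 : ℤ)) ∧
      IsDomain (Nov ℤ) ∧ IsPrincipalIdealRing (Nov ℤ) :=
  ⟨inferInstance, NovPID.nov_add, NovPID.nov_mul, NovPID.nov_one, NovPID.nov_zero,
    inferInstance, inferInstance⟩
end
end

section
/- Let X be a locally path-connected topological space and let ω = {f_U}_{U ∈ 𝒰} be a continuous closed 1-form on X. Then there exists a continuous function f : X → ℝ with ω = df (meaning f − f_U is locally constant on U for every U ∈ 𝒰) if and only if ∫_γ ω = 0 for every continuous loop γ : [0,1] → X with γ(0) = γ(1). -/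
open Set

/-- A continuous closed 1-form on a topological space `X`: a collection of
continuous real-valued functions `f i : U i → ℝ` indexed by an open cover
`{U i}` of `X`, such that on overlaps the differences `f i − f j` are locally
constant.  (The functions are recorded as total functions `X → ℝ`; only their
restrictions to `U i` matter.) -/
structure ClosedOneForm (X : Type) [TopologicalSpace X] : Type 1 where
  ι : Type
  U : ι → Set X
  isOpen : ∀ i, IsOpen (U i)
  covers : ∀ x : X, ∃ i, x ∈ U i
  f : ι → X → ℝ
  cont : ∀ i, ContinuousOn (f i) (U i)
  locConst : ∀ i j, ∀ x ∈ U i ∩ U j, ∃ W, IsOpen W ∧ x ∈ W ∧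
    ∀ y ∈ W ∩ (U i ∩ U j), f i y - f j y = f i x - f j x

namespace ClosedOneForm

variable {X Y : Type} [TopologicalSpace X] [TopologicalSpace Y]

/-- `r` is a value of the line integral `∫_γ ω` of the closed 1-form `ω` over
the path `γ : [a,b] → X`: there is a partition `a = t₀ ≤ ⋯ ≤ t_n = b` with
`γ([t_m, t_{m+1}]) ⊆ U (idx m)` and
`r = Σ_m (f (idx m) (γ t_{m+1}) − f (idx m) (γ t_m))`. -/
def IsPathIntegral (ω : ClosedOneForm X) (γ : ℝ → X) (a b r : ℝ) : Prop :=
  ∃ (n : ℕ) (t : ℕ → ℝ) (idx : ℕ → ω.ι),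
    t 0 = a ∧ t n = b ∧ (∀ m < n, t m ≤ t (m + 1)) ∧
    (∀ m < n, ∀ s ∈ Set.Icc (t m) (t (m + 1)), γ s ∈ ω.U (idx m)) ∧
    r = ∑ m ∈ Finset.range n, (ω.f (idx m) (γ (t (m + 1))) - ω.f (idx m) (γ (t m)))

open scoped Classical in
/-- The line integral `∫_γ ω` over `γ : [a,b] → X` (its value is independent
of all choices; it is defined, via choice, as the common value computed from
any admissible partition). -/
noncomputable def pathIntegral (ω : ClosedOneForm X) (γ : ℝ → X) (a b : ℝ) : ℝ :=
  if h : ∃ r, ω.IsPathIntegral γ a b r then h.choose else 0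

/-- A subset `A ⊆ X` is `N`-movable with respect to `ω` if there is a homotopy
`H : A × [0,1] → X` with `H(a,0) = a` and `∫_{t ↦ H(a,t)} ω ≤ −N` for all `a ∈ A`. -/
def NMovable (ω : ClosedOneForm X) (A : Set X) (N : ℝ) : Prop :=
  ∃ H : X × ℝ → X, ContinuousOn H (A ×ˢ Set.Icc (0 : ℝ) 1) ∧
    (∀ a ∈ A, H (a, 0) = a) ∧
    ∀ a ∈ A, ω.pathIntegral (fun t => H (a, t)) 0 1 ≤ -N

end ClosedOneForm

/-- The inclusion of `V` into `X` is null-homotopic. -/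
def NullhomotopicIn (X : Type) [TopologicalSpace X] (V : Set X) : Prop :=
  ∃ (H : X × ℝ → X) (x₀ : X), ContinuousOn H (V ×ˢ Set.Icc (0 : ℝ) 1) ∧
    (∀ v ∈ V, H (v, 0) = v) ∧ (∀ v ∈ V, H (v, 1) = x₀)

/-- `cat_X(A) ≤ k`: the subset `A` can be covered by `k` open subsets of `X`,
each null-homotopic in `X`. -/
def CatLE (X : Type) [TopologicalSpace X] (A : Set X) (k : ℕ) : Prop :=
  ∃ V : Fin k → Set X, (∀ i, IsOpen (V i)) ∧ A ⊆ ⋃ i, V i ∧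
    ∀ i, NullhomotopicIn X (V i)

/-- `cat_X(A)`, the Lusternik–Schnirelmann category of `A` in `X`. -/
noncomputable def catSet (X : Type) [TopologicalSpace X] (A : Set X) : ℕ :=
  sInf {k | CatLE X A k}

/-- `cat(X)`, the Lusternik–Schnirelmann category of `X`. -/
noncomputable def catSpace (X : Type) [TopologicalSpace X] : ℕ :=
  catSet X Set.univ

namespace ClosedOneForm

/-- `cat(X, ω)`: the minimal `k` such that for every `N > 0` there is a closed
subset `A ⊆ X`, `N`-movable with respect to `ω`, with `cat_X(X − A) ≤ k`. -/
noncomputable def catForm {X : Type} [TopologicalSpace X] (ω : ClosedOneForm X) : ℕ :=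
  sInf {k | ∀ N : ℝ, 0 < N →
    ∃ A : Set X, IsClosed A ∧ ω.NMovable A N ∧ CatLE X Aᶜ k}

end ClosedOneForm

namespace ClosedOneForm

variable {X : Type} [TopologicalSpace X] {ω : ClosedOneForm X}

lemma t_mono {t : ℕ → ℝ} {n : ℕ} (h : ∀ m < n, t m ≤ t (m + 1)) :
    ∀ j ≤ n, ∀ i ≤ j, t i ≤ t j := by
  intro j
  induction j with
  | zero => intro _ i hi; rw [Nat.le_zero.mp hi]
  | succ k ih =>
    intro hk i hi
    rcases Nat.lt_or_ge i (k + 1) with hik | hik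
    · exact le_trans (ih (le_trans (Nat.le_succ k) hk) i (Nat.lt_succ_iff.mp hik))
        (h k (Nat.lt_of_succ_le hk))
    · rw [le_antisymm hi hik]

lemma constOn {g : X → ℝ} {T S : Set X} (hS : IsPreconnected S) (hST : S ⊆ T)
    (h : ∀ x ∈ S, ∃ W, IsOpen W ∧ x ∈ W ∧ ∀ y ∈ W ∩ T, g y = g x) :
    ∀ x ∈ S, ∀ y ∈ S, g x = g y := by
  intro x hx y hy
  by_contra hne
  choose W hWo hmem hconst using h
  set u : Set X := ⋃ (z : X), ⋃ (hz : z ∈ S), ⋃ (_ : g z = g x), W z hz with hu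
  set v : Set X := ⋃ (z : X), ⋃ (hz : z ∈ S), ⋃ (_ : g z ≠ g x), W z hz with hv
  have huo : IsOpen u :=
    isOpen_iUnion fun z => isOpen_iUnion fun hz => isOpen_iUnion fun _ => hWo z hz
  have hvo : IsOpen v :=
    isOpen_iUnion fun z => isOpen_iUnion fun hz => isOpen_iUnion fun _ => hWo z hz
  have hcover : S ⊆ u ∪ v := by
    intro z hz
    by_cases hgz : g z = g x
    · exact Or.inl (mem_iUnion.2 ⟨z, mem_iUnion.2 ⟨hz, mem_iUnion.2 ⟨hgz, hmem z hz⟩⟩⟩)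
    · exact Or.inr (mem_iUnion.2 ⟨z, mem_iUnion.2 ⟨hz, mem_iUnion.2 ⟨hgz, hmem z hz⟩⟩⟩)
  have h1 : (S ∩ u).Nonempty :=
    ⟨x, hx, mem_iUnion.2 ⟨x, mem_iUnion.2 ⟨hx, mem_iUnion.2 ⟨rfl, hmem x hx⟩⟩⟩⟩
  have h2 : (S ∩ v).Nonempty :=
    ⟨y, hy, mem_iUnion.2 ⟨y, mem_iUnion.2 ⟨hy, mem_iUnion.2 ⟨fun e => hne e.symm, hmem y hy⟩⟩⟩⟩
  obtain ⟨w, hwS, hwu, hwv⟩ := hS u v huo hvo hcover h1 h2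
  obtain ⟨_, ⟨z1, rfl⟩, hw1⟩ := hwu
  obtain ⟨_, ⟨hz1, rfl⟩, hw1⟩ := hw1
  obtain ⟨_, ⟨hgz1, rfl⟩, hw1⟩ := hw1
  obtain ⟨_, ⟨z2, rfl⟩, hw2⟩ := hwv
  obtain ⟨_, ⟨hz2, rfl⟩, hw2⟩ := hw2
  obtain ⟨_, ⟨hgz2, rfl⟩, hw2⟩ := hw2
  have e1 : g w = g z1 := hconst z1 hz1 w ⟨hw1, hST hwS⟩
  have e2 : g w = g z2 := hconst z2 hz2 w ⟨hw2, hST hwS⟩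
  exact hgz2 (by rw [← e2, e1, hgz1])

lemma seg_subset {t : ℕ → ℝ} {n : ℕ} {a b : ℝ} (ht0 : t 0 = a) (htn : t n = b)
    (hmono : ∀ m < n, t m ≤ t (m + 1)) {m : ℕ} (hm : m < n) :
    Icc (t m) (t (m + 1)) ⊆ Icc a b :=
  Icc_subset_Icc (ht0 ▸ t_mono hmono m (le_of_lt hm) 0 (Nat.zero_le m))
    (htn ▸ t_mono hmono n le_rfl (m + 1) hm)

lemma sum_telescope {γ : ℝ → X} {a b : ℝ} {n : ℕ} {t : ℕ → ℝ} {idx : ℕ → ω.ι}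
    (hcont : ContinuousOn γ (Icc a b))
    (ht0 : t 0 = a) (htn : t n = b) (hmono : ∀ m < n, t m ≤ t (m + 1))
    (g : X → ℝ)
    (hg : ∀ m < n, ∀ x ∈ γ '' Icc (t m) (t (m + 1)), ∃ W, IsOpen W ∧ x ∈ W ∧
        ∀ y ∈ W ∩ γ '' Icc (t m) (t (m + 1)), ω.f (idx m) y - g y = ω.f (idx m) x - g x) :
    ∑ m ∈ Finset.range n, (ω.f (idx m) (γ (t (m + 1))) - ω.f (idx m) (γ (t m)))
      = g (γ b) - g (γ a) := by
  have key : ∀ m < n, ω.f (idx m) (γ (t (m + 1))) - ω.f (idx m) (γ (t m))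
      = g (γ (t (m + 1))) - g (γ (t m)) := by
    intro m hm
    have hpre : IsPreconnected (γ '' Icc (t m) (t (m + 1))) :=
      isPreconnected_Icc.image γ (hcont.mono (seg_subset ht0 htn hmono hm))
    have h1 : γ (t m) ∈ γ '' Icc (t m) (t (m + 1)) :=
      mem_image_of_mem γ (left_mem_Icc.2 (hmono m hm))
    have h2 : γ (t (m + 1)) ∈ γ '' Icc (t m) (t (m + 1)) :=
      mem_image_of_mem γ (right_mem_Icc.2 (hmono m hm))
    have := constOn (g := fun y => ω.f (idx m) y - g y) hpre subset_rfl (hg m hm) _ h2 _ h1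
    linarith
  rw [Finset.sum_congr rfl fun m hm => key m (Finset.mem_range.mp hm),
    Finset.sum_range_sub (fun m => g (γ (t m))), ht0, htn]

lemma isPathIntegral_of_subset {γ : ℝ → X} {a b r : ℝ} {i : ω.ι}
    (hcont : ContinuousOn γ (Icc a b)) (hsub : ∀ s ∈ Icc a b, γ s ∈ ω.U i)
    (h : ω.IsPathIntegral γ a b r) : r = ω.f i (γ b) - ω.f i (γ a) := by
  obtain ⟨n, t, idx, ht0, htn, hmono, hmem, hsum⟩ := h
  rw [hsum]
  apply sum_telescope hcont ht0 htn hmono (ω.f i)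
  intro m hm x hx
  have hxT : x ∈ ω.U (idx m) ∩ ω.U i := by
    obtain ⟨s, hs, rfl⟩ := hx
    exact ⟨hmem m hm s hs, hsub s (seg_subset ht0 htn hmono hm hs)⟩
  obtain ⟨W, hWo, hxW, hc⟩ := ω.locConst (idx m) i x hxT
  refine ⟨W, hWo, hxW, fun y hy => ?_⟩
  obtain ⟨s, hs, rfl⟩ := hy.2
  exact hc _ ⟨hy.1, hmem m hm s hs, hsub s (seg_subset ht0 htn hmono hm hs)⟩


lemma exists_isPathIntegral {γ : ℝ → X} {a b : ℝ} (hab : a ≤ b)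
    (hcont : ContinuousOn γ (Icc a b)) : ∃ r, ω.IsPathIntegral γ a b r := by
  have hch : ∀ s : Icc a b, ∃ (i : ω.ι) (O : Set ℝ), IsOpen O ∧ (s : ℝ) ∈ O ∧
      ∀ u ∈ O ∩ Icc a b, γ u ∈ ω.U i := by
    rintro ⟨s, hs⟩
    obtain ⟨i, hi⟩ := ω.covers (γ s)
    obtain ⟨O, hOo, hsO, hOsub⟩ := (continuousOn_iff.mp hcont) s hs (ω.U i) (ω.isOpen i) hi
    exact ⟨i, O, hOo, hsO, fun u hu => hOsub hu⟩
  choose ich O hOo hmemO hOsub using hch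
  have hcover : Icc a b ⊆ ⋃ p : Icc a b, O p := by
    intro z hz
    exact mem_iUnion.2 ⟨⟨z, hz⟩, hmemO ⟨z, hz⟩⟩
  obtain ⟨δ, hδ, hball⟩ := lebesgue_number_lemma_of_metric isCompact_Icc (fun p => hOo p) hcover
  set n : ℕ := ⌈(b - a) / δ⌉₊ + 1 with hn
  have hn0 : (0 : ℝ) < n := by positivity
  set step : ℝ := (b - a) / n with hstep
  have hstep0 : 0 ≤ step := by
    apply div_nonneg (by linarith) (le_of_lt hn0)
  have hstepδ : step < δ := by
    rw [hstep, div_lt_iff₀ hn0]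
    have h1 : (b - a) / δ ≤ (⌈(b - a) / δ⌉₊ : ℝ) := Nat.le_ceil _
    have h2 : ((⌈(b - a) / δ⌉₊ : ℝ)) < n := by
      rw [hn]; push_cast; linarith
    calc b - a = ((b - a) / δ) * δ := by field_simp
    _ ≤ (⌈(b - a) / δ⌉₊ : ℝ) * δ := by apply mul_le_mul_of_nonneg_right h1 (le_of_lt hδ)
    _ < δ * n := by rw [mul_comm δ]; exact mul_lt_mul_of_pos_right h2 hδ
  set t : ℕ → ℝ := fun m => a + m * step with ht
  have htIcc : ∀ m ≤ n, t m ∈ Icc a b := by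
    intro m hm
    constructor
    · have : (0:ℝ) ≤ m * step := by positivity
      simp [ht]; linarith
    · have : (m : ℝ) * step ≤ n * step := by
        apply mul_le_mul_of_nonneg_right _ hstep0
        exact_mod_cast hm
      have hns : (n : ℝ) * step = b - a := by
        rw [hstep]; field_simp
      simp [ht]; linarith [this, hns ▸ this]
  have hidx : ∀ m, ∃ i : ω.ι, m < n → ∀ s ∈ Icc (t m) (t (m + 1)), γ s ∈ ω.U i := by
    intro m
    by_cases hm : m < n
    · obtain ⟨p, hp⟩ := hball (t m) (htIcc m (le_of_lt hm))
      refine ⟨ich p, fun _ s hs => ?_⟩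
      apply hOsub p
      constructor
      · apply hp
        rw [Metric.mem_ball, Real.dist_eq, abs_lt]
        have e1 : t m ≤ s := hs.1
        have e2 : s ≤ t (m + 1) := hs.2
        have e3 : t (m + 1) - t m = step := by simp [ht]; push_cast; ring
        constructor <;> linarith
      · have h1 := (htIcc m (le_of_lt hm)).1
        have h2 := (htIcc (m + 1) hm).2
        exact ⟨le_trans h1 hs.1, le_trans hs.2 h2⟩
    · exact ⟨ich ⟨a, left_mem_Icc.2 hab⟩, fun hm' => absurd hm' hm⟩
  choose idx hidxspec using hidx
  refine ⟨_, n, t, idx, by simp [ht], ?_, ?_, fun m hm => hidxspec m hm, rfl⟩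
  · have hns : (n : ℝ) * step = b - a := by rw [hstep]; field_simp
    simp [ht]; linarith [hns]
  · intro m _
    have : (m : ℝ) * step ≤ (m + 1) * step := by
      apply mul_le_mul_of_nonneg_right _ hstep0; push_cast; linarith
    simp [ht]; push_cast; linarith

lemma isPathIntegral_split {γ : ℝ → X} {a b c r : ℝ} (hac : a ≤ c) (hcb : c ≤ b)
    (h : ω.IsPathIntegral γ a b r) :
    ∃ r1 r2, ω.IsPathIntegral γ a c r1 ∧ ω.IsPathIntegral γ c b r2 ∧ r = r1 + r2 := by
  classical
  obtain ⟨n, t, idx, ht0, htn, hmono, hmem, hsum⟩ := h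
  obtain ⟨i0, hi0⟩ := ω.covers (γ c)
  set idx1 : ℕ → ω.ι := fun m => if c < t m then i0 else idx m with hidx1
  set idx2 : ℕ → ω.ι := fun m => if t (m + 1) < c then i0 else idx m with hidx2
  refine ⟨∑ m ∈ Finset.range n,
      (ω.f (idx1 m) (γ (min (t (m + 1)) c)) - ω.f (idx1 m) (γ (min (t m) c))),
    ∑ m ∈ Finset.range n,
      (ω.f (idx2 m) (γ (max (t (m + 1)) c)) - ω.f (idx2 m) (γ (max (t m) c))),
    ⟨n, fun m => min (t m) c, idx1, by show min (t 0) c = a; rw [ht0]; exact min_eq_left hac,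
      by show min (t n) c = c; rw [htn]; exact min_eq_right hcb,
      fun m hm => min_le_min (hmono m hm) le_rfl, ?_, rfl⟩,
    ⟨n, fun m => max (t m) c, idx2, by show max (t 0) c = c; rw [ht0]; exact max_eq_right hac,
      by show max (t n) c = b; rw [htn]; exact max_eq_left hcb,
      fun m hm => max_le_max (hmono m hm) le_rfl, ?_, rfl⟩, ?_⟩
  · intro m hm s hs
    have hs : s ∈ Icc (min (t m) c) (min (t (m + 1)) c) := hs
    by_cases hc : c < t m
    · have e1 : min (t m) c = c := min_eq_right (le_of_lt hc)
      have e2 : min (t (m + 1)) c = c := min_eq_right (le_of_lt (lt_of_lt_of_le hc (hmono m hm)))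
      rw [e1, e2] at hs
      have : s = c := le_antisymm hs.2 hs.1
      rw [this, hidx1]
      simp only [if_pos hc]
      exact hi0
    · push_neg at hc
      have e1 : min (t m) c = t m := min_eq_left hc
      rw [hidx1]
      simp only [if_neg (not_lt.mpr hc)]
      apply hmem m hm
      exact ⟨e1 ▸ hs.1, le_trans hs.2 (min_le_left _ _)⟩
  · intro m hm s hs
    have hs : s ∈ Icc (max (t m) c) (max (t (m + 1)) c) := hs
    by_cases hc : t (m + 1) < c
    · have e1 : max (t m) c = c := max_eq_right (le_of_lt (lt_of_le_of_lt (hmono m hm) hc))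
      have e2 : max (t (m + 1)) c = c := max_eq_right (le_of_lt hc)
      rw [e1, e2] at hs
      have : s = c := le_antisymm hs.2 hs.1
      rw [this, hidx2]
      simp only [if_pos hc]
      exact hi0
    · push_neg at hc
      have e2 : max (t (m + 1)) c = t (m + 1) := max_eq_left hc
      rw [hidx2]
      simp only [if_neg (not_lt.mpr hc)]
      apply hmem m hm
      exact ⟨le_trans (le_max_left _ _) hs.1, e2 ▸ hs.2⟩
  · rw [hsum, ← Finset.sum_add_distrib]
    apply Finset.sum_congr rfl
    intro m hm
    have hm' := Finset.mem_range.mp hm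
    by_cases hc1 : c < t m
    · have hc2 : ¬ t (m + 1) < c := not_lt.mpr (le_of_lt (lt_of_lt_of_le hc1 (hmono m hm')))
      have e1 : min (t m) c = c := min_eq_right (le_of_lt hc1)
      have e2 : min (t (m + 1)) c = c := min_eq_right (le_of_lt (lt_of_lt_of_le hc1 (hmono m hm')))
      have e3 : max (t m) c = t m := max_eq_left (le_of_lt hc1)
      have e4 : max (t (m + 1)) c = t (m + 1) :=
        max_eq_left (le_of_lt (lt_of_lt_of_le hc1 (hmono m hm')))
      rw [hidx1, hidx2]
      simp only [if_pos hc1, if_neg hc2]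
      rw [e1, e2, e3, e4]; ring
    · push_neg at hc1
      by_cases hc2 : t (m + 1) < c
      · have e1 : min (t m) c = t m := min_eq_left hc1
        have e2 : min (t (m + 1)) c = t (m + 1) := min_eq_left (le_of_lt hc2)
        have e3 : max (t m) c = c := max_eq_right hc1
        have e4 : max (t (m + 1)) c = c := max_eq_right (le_of_lt hc2)
        rw [hidx1, hidx2]
        simp only [if_neg (not_lt.mpr hc1), if_pos hc2]
        rw [e1, e2, e3, e4]; ring
      · push_neg at hc2
        have e1 : min (t m) c = t m := min_eq_left hc1
        have e2 : min (t (m + 1)) c = c := min_eq_right hc2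
        have e3 : max (t m) c = c := max_eq_right hc1
        have e4 : max (t (m + 1)) c = t (m + 1) := max_eq_left hc2
        rw [hidx1, hidx2]
        simp only [if_neg (not_lt.mpr hc1), if_neg (not_lt.mpr hc2)]
        rw [e1, e2, e3, e4]; ring

lemma sum_unique : ∀ (n' : ℕ) (t' : ℕ → ℝ) (idx' : ℕ → ω.ι) (γ : ℝ → X) (a b r : ℝ),
    ContinuousOn γ (Icc a b) →
    t' 0 = a → t' n' = b → (∀ m < n', t' m ≤ t' (m + 1)) →
    (∀ m < n', ∀ s ∈ Icc (t' m) (t' (m + 1)), γ s ∈ ω.U (idx' m)) →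
    ω.IsPathIntegral γ a b r →
    r = ∑ m ∈ Finset.range n', (ω.f (idx' m) (γ (t' (m + 1))) - ω.f (idx' m) (γ (t' m))) := by
  intro n'
  induction n' with
  | zero =>
    intro t' idx' γ a b r hcont h0 hn _ _ h
    obtain ⟨n, t, idx, ht0, htn, hmono, hmem, hsum⟩ := h
    have hab : b = a := by rw [← h0, ← hn]
    have hta : ∀ m ≤ n, t m = a := by
      intro m hm
      refine le_antisymm ?_ ?_
      · have := t_mono hmono n le_rfl m hm
        rw [htn, hab] at this; exact this
      · have := t_mono hmono m hm 0 (Nat.zero_le m)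
        rw [ht0] at this; exact this
    rw [hsum, Finset.sum_range_zero]
    apply Finset.sum_eq_zero
    intro m hm
    have hm' := Finset.mem_range.mp hm
    rw [hta (m + 1) hm', hta m (le_of_lt hm')]
    ring
  | succ k ih =>
    intro t' idx' γ a b r hcont h0 hn hmono' hmem' h
    have hac : a ≤ t' k := by
      rw [← h0]; exact t_mono hmono' k (Nat.le_succ k) 0 (Nat.zero_le k)
    have hcb : t' k ≤ b := by
      rw [← hn]; exact t_mono hmono' (k + 1) le_rfl k (Nat.le_succ k)
    obtain ⟨r1, r2, h1, h2, hr⟩ := isPathIntegral_split hac hcb h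
    have e1 : r1 = ∑ m ∈ Finset.range k,
        (ω.f (idx' m) (γ (t' (m + 1))) - ω.f (idx' m) (γ (t' m))) :=
      ih t' idx' γ a (t' k) r1 (hcont.mono (Icc_subset_Icc le_rfl hcb)) h0 rfl
        (fun m hm => hmono' m (Nat.lt_succ_of_lt hm))
        (fun m hm => hmem' m (Nat.lt_succ_of_lt hm)) h1
    have e2 : r2 = ω.f (idx' k) (γ b) - ω.f (idx' k) (γ (t' k)) := by
      apply isPathIntegral_of_subset (hcont.mono (Icc_subset_Icc hac le_rfl)) _ h2
      intro s hs
      apply hmem' k (Nat.lt_succ_self k)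
      rw [hn]; exact hs
    rw [Finset.sum_range_succ, hr, e1, e2, hn]

lemma pathIntegral_eq {γ : ℝ → X} {a b r : ℝ} (hcont : ContinuousOn γ (Icc a b))
    (h : ω.IsPathIntegral γ a b r) : ω.pathIntegral γ a b = r := by
  have hex : ∃ r, ω.IsPathIntegral γ a b r := ⟨r, h⟩
  rw [pathIntegral, dif_pos hex]
  obtain ⟨n', t', idx', h0, hn, hmono, hmem, hsum⟩ := hex.choose_spec
  rw [hsum]
  exact (sum_unique n' t' idx' γ a b r hcont h0 hn hmono hmem h).symm
lemma isPathIntegral_reverse {γ : ℝ → X} {r : ℝ}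
    (h : ω.IsPathIntegral γ 0 1 r) : ω.IsPathIntegral (fun s => γ (1 - s)) 0 1 (-r) := by
  obtain ⟨n, t, idx, ht0, htn, hmono, hmem, hsum⟩ := h
  refine ⟨n, fun m => 1 - t (n - m), fun m => idx (n - (m + 1)),
    by show 1 - t (n - 0) = 0; simp [htn], by show 1 - t (n - n) = 1; simp [ht0], ?_, ?_, ?_⟩
  · intro m hm
    show 1 - t (n - m) ≤ 1 - t (n - (m + 1))
    have h1 : n - (m + 1) < n := by omega
    have h2 : n - m = (n - (m + 1)) + 1 := by omega
    rw [h2]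
    linarith [hmono _ h1]
  · intro m hm s hs
    have hs : s ∈ Icc (1 - t (n - m)) (1 - t (n - (m + 1))) := hs
    have h1 : n - (m + 1) < n := by omega
    have h2 : n - m = (n - (m + 1)) + 1 := by omega
    show γ (1 - s) ∈ ω.U (idx (n - (m + 1)))
    apply hmem _ h1
    rw [← h2]
    exact ⟨by linarith [hs.2], by linarith [hs.1]⟩
  · have step1 : ∑ m ∈ Finset.range n,
        (ω.f ((fun m => idx (n - (m + 1))) m) ((fun s => γ (1 - s)) ((fun m => 1 - t (n - m)) (m + 1)))
          - ω.f ((fun m => idx (n - (m + 1))) m) ((fun s => γ (1 - s)) ((fun m => 1 - t (n - m)) m)))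
        = ∑ m ∈ Finset.range n,
          -(ω.f (idx (n - 1 - m)) (γ (t (n - 1 - m + 1))) - ω.f (idx (n - 1 - m)) (γ (t (n - 1 - m)))) := by
      apply Finset.sum_congr rfl
      intro m hm
      have hm' := Finset.mem_range.mp hm
      have h2 : n - (m + 1) = n - 1 - m := by omega
      have h3 : n - m = (n - 1 - m) + 1 := by omega
      have e1 : (1 : ℝ) - (1 - t (n - (m + 1))) = t (n - (m + 1)) := by ring
      have e2 : (1 : ℝ) - (1 - t (n - m)) = t (n - m) := by ring
      show ω.f (idx (n - (m + 1))) (γ (1 - (1 - t (n - (m + 1)))))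
          - ω.f (idx (n - (m + 1))) (γ (1 - (1 - t (n - m))))
        = -(ω.f (idx (n - 1 - m)) (γ (t (n - 1 - m + 1))) - ω.f (idx (n - 1 - m)) (γ (t (n - 1 - m))))
      rw [e1, e2, h2, h3]
      ring
    rw [hsum, step1,
      Finset.sum_range_reflect (fun j => -(ω.f (idx j) (γ (t (j + 1))) - ω.f (idx j) (γ (t j)))) n]
    rw [← Finset.sum_neg_distrib]

lemma isPathIntegral_concat {γ γ1 γ2 : ℝ → X} {r1 r2 : ℝ}
    (h1 : ω.IsPathIntegral γ1 0 1 r1) (h2 : ω.IsPathIntegral γ2 0 1 r2)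
    (e1 : ∀ s ∈ Icc (0 : ℝ) (1 / 2), γ s = γ1 (2 * s))
    (e2 : ∀ s ∈ Icc (1 / 2 : ℝ) 1, γ s = γ2 (2 * s - 1)) :
    ω.IsPathIntegral γ 0 1 (r1 + r2) := by
  classical
  obtain ⟨n, t, idx, ht0, htn, hmono, hmem, hsum⟩ := h1
  obtain ⟨n', t', idx', ht0', htn', hmono', hmem', hsum'⟩ := h2
  rcases Nat.eq_zero_or_pos n with hn | hn
  · exfalso; rw [hn, ht0] at htn; norm_num at htn
  rcases Nat.eq_zero_or_pos n' with hn' | hn'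
  · exfalso; rw [hn', ht0'] at htn'; norm_num at htn'
  have hb : ∀ m ≤ n, 0 ≤ t m ∧ t m ≤ 1 := fun m hm =>
    ⟨ht0 ▸ t_mono hmono m hm 0 (Nat.zero_le m), htn ▸ t_mono hmono n le_rfl m hm⟩
  have hb' : ∀ m ≤ n', 0 ≤ t' m ∧ t' m ≤ 1 := fun m hm =>
    ⟨ht0' ▸ t_mono hmono' m hm 0 (Nat.zero_le m), htn' ▸ t_mono hmono' n' le_rfl m hm⟩
  set T : ℕ → ℝ := fun m => if m ≤ n then t m / 2 else (t' (m - n) + 1) / 2 with hT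
  set IDX : ℕ → ω.ι := fun m => if m < n then idx m else idx' (m - n) with hIDX
  have hTval : ∀ m, n ≤ m → T m = (t' (m - n) + 1) / 2 := by
    intro m hm
    by_cases h : m ≤ n
    · have : m = n := le_antisymm h hm
      rw [hT]; simp only [this, if_pos le_rfl, htn, Nat.sub_self, ht0']
      norm_num
    · rw [hT]; simp only [if_neg h]
  have hTlow : ∀ m, m ≤ n → T m = t m / 2 := by
    intro m hm; rw [hT]; simp only [if_pos hm]
  refine ⟨n + n', T, IDX, ?_, ?_, ?_, ?_, ?_⟩
  · rw [hTlow 0 (Nat.zero_le n), ht0]; norm_num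
  · rw [hTval (n + n') (Nat.le_add_right n n'), Nat.add_sub_cancel_left, htn']; norm_num
  · intro m hm
    rcases Nat.lt_or_ge m n with hmn | hmn
    · rw [hTlow m (le_of_lt hmn), hTlow (m + 1) hmn]
      linarith [hmono m hmn]
    · rw [hTval m hmn, hTval (m + 1) (le_trans hmn (Nat.le_succ m))]
      have hk : m - n < n' := by omega
      have hk2 : m + 1 - n = (m - n) + 1 := by omega
      rw [hk2]
      linarith [hmono' (m - n) hk]
  · intro m hm s hs
    rcases Nat.lt_or_ge m n with hmn | hmn
    · rw [hTlow m (le_of_lt hmn), hTlow (m + 1) hmn] at hs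
      have hbm := hb m (le_of_lt hmn)
      have hbm1 := hb (m + 1) hmn
      have hs01 : s ∈ Icc (0 : ℝ) (1 / 2) := ⟨by linarith [hs.1, hbm.1], by linarith [hs.2, hbm1.2]⟩
      rw [hIDX]
      simp only [if_pos hmn]
      rw [e1 s hs01]
      exact hmem m hmn (2 * s) ⟨by linarith [hs.1], by linarith [hs.2]⟩
    · rw [hTval m hmn, hTval (m + 1) (le_trans hmn (Nat.le_succ m))] at hs
      have hk : m - n < n' := by omega
      have hk2 : m + 1 - n = (m - n) + 1 := by omega
      rw [hk2] at hs
      have hbm := hb' (m - n) (le_of_lt hk)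
      have hbm1 := hb' (m - n + 1) hk
      have hs01 : s ∈ Icc (1 / 2 : ℝ) 1 := ⟨by linarith [hs.1, hbm.1], by linarith [hs.2, hbm1.2]⟩
      rw [hIDX]
      simp only [if_neg (not_lt.mpr hmn)]
      rw [e2 s hs01]
      exact hmem' (m - n) hk (2 * s - 1) ⟨by linarith [hs.1], by linarith [hs.2]⟩
  · rw [Finset.sum_range_add]
    have eq1 : ∑ m ∈ Finset.range n, (ω.f (IDX m) (γ (T (m + 1))) - ω.f (IDX m) (γ (T m))) = r1 := by
      rw [hsum]
      apply Finset.sum_congr rfl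
      intro m hm
      have hm' := Finset.mem_range.mp hm
      have hbm := hb m (le_of_lt hm')
      have hbm1 := hb (m + 1) hm'
      have g1 : γ (T (m + 1)) = γ1 (t (m + 1)) := by
        rw [hTlow (m + 1) hm', e1 (t (m + 1) / 2) ⟨by linarith [hbm1.1], by linarith [hbm1.2]⟩]
        congr 1; ring
      have g2 : γ (T m) = γ1 (t m) := by
        rw [hTlow m (le_of_lt hm'), e1 (t m / 2) ⟨by linarith [hbm.1], by linarith [hbm.2]⟩]
        congr 1; ring
      rw [hIDX]
      simp only [if_pos hm']
      rw [g1, g2]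
    have eq2 : ∑ m ∈ Finset.range n',
        (ω.f (IDX (n + m)) (γ (T (n + m + 1))) - ω.f (IDX (n + m)) (γ (T (n + m)))) = r2 := by
      rw [hsum']
      apply Finset.sum_congr rfl
      intro m hm
      have hm' := Finset.mem_range.mp hm
      have hbm := hb' m (le_of_lt hm')
      have hbm1 := hb' (m + 1) hm'
      have g1 : γ (T (n + m + 1)) = γ2 (t' (m + 1)) := by
        rw [hTval (n + m + 1) (by omega), (by omega : n + m + 1 - n = m + 1),
          e2 ((t' (m + 1) + 1) / 2) ⟨by linarith [hbm1.1], by linarith [hbm1.2]⟩]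
        congr 1; ring
      have g2 : γ (T (n + m)) = γ2 (t' m) := by
        rw [hTval (n + m) (by omega), (by omega : n + m - n = m),
          e2 ((t' m + 1) / 2) ⟨by linarith [hbm.1], by linarith [hbm.2]⟩]
        congr 1; ring
      have gi : IDX (n + m) = idx' m := by
        rw [hIDX]
        simp only [if_neg (by omega : ¬ n + m < n), Nat.add_sub_cancel_left]
      rw [gi, g1, g2]
    rw [eq1, eq2]
lemma extend_trans_left {x y z : X} (p : Path x y) (q : Path y z) :
    ∀ s ∈ Icc (0 : ℝ) (1 / 2), (p.trans q).extend s = p.extend (2 * s) := by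
  intro s hs
  have hs1 : s ∈ Icc (0 : ℝ) 1 := ⟨hs.1, by linarith [hs.2]⟩
  rw [Path.extend_apply _ hs1, Path.trans_apply]
  have : ((⟨s, hs1⟩ : unitInterval) : ℝ) ≤ 1 / 2 := hs.2
  rw [dif_pos this]
  rw [Path.extend_apply p (by constructor <;> [linarith [hs.1]; linarith [hs.2]] :
    2 * s ∈ Icc (0 : ℝ) 1)]

lemma extend_trans_right {x y z : X} (p : Path x y) (q : Path y z) :
    ∀ s ∈ Icc (1 / 2 : ℝ) 1, (p.trans q).extend s = q.extend (2 * s - 1) := by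
  intro s hs
  have hs1 : s ∈ Icc (0 : ℝ) 1 := ⟨by linarith [hs.1], hs.2⟩
  rw [Path.extend_apply _ hs1, Path.trans_apply]
  rcases lt_or_eq_of_le hs.1 with h | h
  · have : ¬ ((⟨s, hs1⟩ : unitInterval) : ℝ) ≤ 1 / 2 := by simpa using h
    rw [dif_neg this]
    rw [Path.extend_apply q (by constructor <;> [linarith; linarith [hs.2]] :
      2 * s - 1 ∈ Icc (0 : ℝ) 1)]
  · have h' : s = 1 / 2 := h.symm
    subst h'
    have : ((⟨(1 : ℝ) / 2, hs1⟩ : unitInterval) : ℝ) ≤ 1 / 2 := le_rfl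
    rw [dif_pos this]
    have e1 : (⟨2 * (1 / 2 : ℝ), by norm_num⟩ : unitInterval) = 1 := by
      ext; norm_num
    have e2 : (2 : ℝ) * (1 / 2) - 1 = 0 := by norm_num
    rw [e1, e2, Path.extend_zero, Path.target]

lemma extend_symm {x y : X} (p : Path x y) (s : ℝ) :
    p.symm.extend s = p.extend (1 - s) := by
  rcases le_or_gt s 0 with h | h
  · rw [Path.extend_of_le_zero _ h, Path.extend_of_one_le _ (by linarith)]
  rcases le_or_gt 1 s with h1 | h1
  · rw [Path.extend_of_one_le _ h1, Path.extend_of_le_zero _ (by linarith)]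
  have hs : s ∈ Icc (0 : ℝ) 1 := ⟨le_of_lt h, le_of_lt h1⟩
  have hs' : 1 - s ∈ Icc (0 : ℝ) 1 := ⟨by linarith, by linarith⟩
  rw [Path.extend_apply _ hs, Path.extend_apply _ hs']
  show p (unitInterval.symm ⟨s, hs⟩) = _
  congr 1

noncomputable def basept (x : X) : X := (Quotient.mk (pathSetoid X) x).out

lemma joined_basept (x : X) : Joined (basept x) x := by
  have h : Quotient.mk (pathSetoid X) (basept x) = Quotient.mk (pathSetoid X) x :=
    Quotient.out_eq _
  exact Quotient.exact h

lemma basept_eq {x y : X} (h : Joined x y) : basept x = basept y := by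
  unfold basept
  rw [Quotient.sound h]

variable (ω) in
noncomputable def prim (x : X) : ℝ :=
  ω.pathIntegral (Path.extend (joined_basept x).somePath) 0 1

lemma prim_key [LocallyPathConnectedSpace X]
    (hyp : ∀ γ : ℝ → X, ContinuousOn γ (Icc (0 : ℝ) 1) → γ 0 = γ 1 →
      ω.pathIntegral γ 0 1 = 0)
    (i : ω.ι) {x : X} (hx : x ∈ ω.U i) :
    ∃ W, IsOpen W ∧ x ∈ W ∧ W ⊆ ω.U i ∧
      ∀ y ∈ W, ω.prim y = ω.prim x + (ω.f i y - ω.f i x) := by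
  refine ⟨pathComponentIn (ω.U i) x, (ω.isOpen i).pathComponentIn x,
    mem_pathComponentIn_self hx, pathComponentIn_subset, ?_⟩
  intro y hy
  have hyJ : JoinedIn (ω.U i) x y := hy
  set q : Path x y := hyJ.somePath with hq
  set p : Path (basept x) x := (joined_basept x).somePath with hp
  set py : Path (basept y) y := (joined_basept y).somePath with hpy
  have hbxy : basept y = basept x := (basept_eq hyJ.joined).symm
  obtain ⟨r1, hr1⟩ := exists_isPathIntegral (ω := ω) zero_le_one p.continuous_extend.continuousOn
  obtain ⟨r2, hr2⟩ := exists_isPathIntegral (ω := ω) zero_le_one q.continuous_extend.continuousOn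
  obtain ⟨r3, hr3⟩ := exists_isPathIntegral (ω := ω) zero_le_one py.continuous_extend.continuousOn
  have hfx : ω.prim x = r1 := pathIntegral_eq p.continuous_extend.continuousOn hr1
  have hfy : ω.prim y = r3 := pathIntegral_eq py.continuous_extend.continuousOn hr3
  have hr2v : r2 = ω.f i y - ω.f i x := by
    have := isPathIntegral_of_subset q.continuous_extend.continuousOn
      (fun s hs => by rw [Path.extend_apply _ hs]; exact hyJ.somePath_mem _) hr2
    rwa [Path.extend_one, Path.extend_zero] at this
  set L : Path (basept x) (basept y) := (p.trans q).trans py.symm with hL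
  have hA : ω.IsPathIntegral (Path.extend (p.trans q)) 0 1 (r1 + r2) :=
    isPathIntegral_concat hr1 hr2 (extend_trans_left p q) (extend_trans_right p q)
  have hB : ω.IsPathIntegral (fun s => py.extend (1 - s)) 0 1 (-r3) :=
    isPathIntegral_reverse hr3
  have hLint : ω.IsPathIntegral (Path.extend L) 0 1 ((r1 + r2) + -r3) := by
    apply isPathIntegral_concat hA hB (extend_trans_left _ _)
    intro s hs
    rw [extend_trans_right _ _ s hs, extend_symm]
  have hzero : (r1 + r2) + -r3 = 0 := by
    rw [← pathIntegral_eq L.continuous_extend.continuousOn hLint]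
    exact hyp _ L.continuous_extend.continuousOn
      (by rw [Path.extend_zero, Path.extend_one, hbxy])
  rw [hfy, hfx]
  linarith [hr2v, hzero]
end ClosedOneForm

/-- **Exactness criterion.**  Let `X` be a locally path-connected topological
space and `ω` a continuous closed 1-form on `X`.  Then there is a continuous
function `f : X → ℝ` with `ω = df` (i.e. `f − f_U` is locally constant on `U`
for every member `U` of the defining cover) if and only if `∫_γ ω = 0` for
every continuous loop `γ : [0,1] → X`, `γ(0) = γ(1)`. -/
theorem exact_iff_all_loop_integrals_vanish
    (X : Type) [TopologicalSpace X] [LocallyPathConnectedSpace X]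
    (ω : ClosedOneForm X) :
    (∃ f : X → ℝ, Continuous f ∧ ∀ i, ∀ x ∈ ω.U i, ∃ W, IsOpen W ∧ x ∈ W ∧
        ∀ y ∈ W ∩ ω.U i, f y - ω.f i y = f x - ω.f i x) ↔
    (∀ γ : ℝ → X, ContinuousOn γ (Set.Icc (0 : ℝ) 1) → γ 0 = γ 1 →
        ω.pathIntegral γ 0 1 = 0) := by
  constructor
  · rintro ⟨f, _, hloc⟩ γ hγ hloop
    by_cases hex : ∃ r, ω.IsPathIntegral γ 0 1 r
    · rw [ClosedOneForm.pathIntegral, dif_pos hex]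
      obtain ⟨n, t, idx, ht0, htn, hmono, hmem, hsum⟩ := hex.choose_spec
      refine Eq.trans hsum (Eq.trans
        (ClosedOneForm.sum_telescope hγ ht0 htn hmono f ?_) (by rw [hloop, sub_self]))
      intro m hm x hx
      have hxU : x ∈ ω.U (idx m) := by
        obtain ⟨s, hs, rfl⟩ := hx
        exact hmem m hm s hs
      obtain ⟨W, hWo, hxW, hc⟩ := hloc (idx m) x hxU
      refine ⟨W, hWo, hxW, fun y hy => ?_⟩
      obtain ⟨s, hs, rfl⟩ := hy.2
      have := hc (γ s) ⟨hy.1, hmem m hm s hs⟩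
      linarith
    · rw [ClosedOneForm.pathIntegral, dif_neg hex]
  · intro hyp
    refine ⟨ω.prim, ?_, ?_⟩
    · rw [continuous_iff_continuousAt]
      intro x
      obtain ⟨i, hi⟩ := ω.covers x
      obtain ⟨W, hWo, hxW, hWU, hW⟩ := ClosedOneForm.prim_key hyp i hi
      have hcW : ContinuousOn ω.prim W :=
        ContinuousOn.congr (f := fun y => ω.prim x + (ω.f i y - ω.f i x))
          (continuousOn_const.add (((ω.cont i).mono hWU).sub continuousOn_const))
          (fun y hy => hW y hy)
      exact hcW.continuousAt (hWo.mem_nhds hxW)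
    · intro i x hx
      obtain ⟨W, hWo, hxW, hWU, hW⟩ := ClosedOneForm.prim_key hyp i hx
      refine ⟨W, hWo, hxW, fun y hy => ?_⟩
      have := hW y hy.1
      linarith
end

section
/- Let X be a compact topological space, let ω be a continuous closed 1-form on X, let f : X → ℝ be a continuous function, and let ω' = ω + df be the closed 1-form obtained by adding f|_U to each f_U. Then cat(X, ω) = cat(X, ω'). In particular, for a finite CW complex X, cat(X, ω) depends only on the cohomology class of ω. -/
open Set

namespace ClosedOneForm

variable {X Y : Type} [TopologicalSpace X] [TopologicalSpace Y]

/-- The pullback `φ*ω` of a closed 1-form along a continuous map `φ : Y → X`,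
given by the cover `{φ⁻¹(U)}` and the functions `f_U ∘ φ`. -/
def pullback (ω : ClosedOneForm X) (φ : Y → X) (hφ : Continuous φ) :
    ClosedOneForm Y where
  ι := ω.ι
  U i := φ ⁻¹' ω.U i
  isOpen i := (ω.isOpen i).preimage hφ
  covers y := ω.covers (φ y)
  f i := ω.f i ∘ φ
  cont i := (ω.cont i).comp hφ.continuousOn (fun _ h => h)
  locConst := by
    intro i j y hy
    obtain ⟨W, hWo, hxW, hW⟩ := ω.locConst i j (φ y) hy
    exact ⟨φ ⁻¹' W, hWo.preimage hφ, hxW, fun z hz => hW (φ z) hz⟩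

/-- The sum `ω₁ + ω₂` of two closed 1-forms on `X`, given on the common
refinement of the two covers by the sums of the local functions. -/
def add (ω₁ ω₂ : ClosedOneForm X) : ClosedOneForm X where
  ι := ω₁.ι × ω₂.ι
  U p := ω₁.U p.1 ∩ ω₂.U p.2
  isOpen p := (ω₁.isOpen p.1).inter (ω₂.isOpen p.2)
  covers x := by
    obtain ⟨i, hi⟩ := ω₁.covers x
    obtain ⟨j, hj⟩ := ω₂.covers x
    exact ⟨(i, j), hi, hj⟩
  f p x := ω₁.f p.1 x + ω₂.f p.2 x
  cont p := ((ω₁.cont p.1).mono Set.inter_subset_left).add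
    ((ω₂.cont p.2).mono Set.inter_subset_right)
  locConst := by
    intro p q x hx
    obtain ⟨W₁, h1o, h1x, h1⟩ := ω₁.locConst p.1 q.1 x ⟨hx.1.1, hx.2.1⟩
    obtain ⟨W₂, h2o, h2x, h2⟩ := ω₂.locConst p.2 q.2 x ⟨hx.1.2, hx.2.2⟩
    refine ⟨W₁ ∩ W₂, h1o.inter h2o, ⟨h1x, h2x⟩, fun y hy => ?_⟩
    have e1 := h1 y ⟨hy.1.1, hy.2.1.1, hy.2.2.1⟩
    have e2 := h2 y ⟨hy.1.2, hy.2.1.2, hy.2.2.2⟩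
    try dsimp only at e1 e2 ⊢
    linarith

/-- The closed 1-form `ω + dg` obtained from `ω` by adding the differential of
a continuous function `g : X → ℝ`, i.e. adding `g|_U` to each local function. -/
def addFun (ω : ClosedOneForm X) (g : X → ℝ) (hg : Continuous g) :
    ClosedOneForm X where
  ι := ω.ι
  U := ω.U
  isOpen := ω.isOpen
  covers := ω.covers
  f i x := ω.f i x + g x
  cont i := (ω.cont i).add hg.continuousOn
  locConst := by
    intro i j x hx
    obtain ⟨W, hWo, hWx, hW⟩ := ω.locConst i j x hx
    refine ⟨W, hWo, hWx, fun y hy => ?_⟩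
    have := hW y hy
    try dsimp only at this ⊢
    linarith

end ClosedOneForm

section Aux

namespace ClosedOneForm

variable {X : Type} [TopologicalSpace X]

private lemma chain_mono {t : ℕ → ℝ} {n : ℕ} (h : ∀ m < n, t m ≤ t (m + 1)) :
    ∀ p q, p ≤ q → q ≤ n → t p ≤ t q := by
  intro p q hpq hqn
  induction q with
  | zero => simp_all
  | succ q ih =>
    rcases Nat.eq_or_lt_of_le hpq with rfl | hlt
    · exact le_refl _
    · exact le_trans (ih (Nat.lt_succ_iff.mp hlt) (le_trans (Nat.le_succ q) hqn))
        (h q (Nat.lt_of_succ_le hqn))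

private lemma lemmaA (ω : ClosedOneForm X) {γ : ℝ → X} {s s' : ℝ}
    (hc : ContinuousOn γ (Set.Icc s s')) {i j : ω.ι}
    (hmaps : ∀ x ∈ Set.Icc s s', γ x ∈ ω.U i ∩ ω.U j) (hs : s ∈ Set.Icc s s')
    (hs' : s' ∈ Set.Icc s s') :
    ω.f i (γ s') - ω.f j (γ s') = ω.f i (γ s) - ω.f j (γ s) := by
  haveI : PreconnectedSpace (Set.Icc s s') := Subtype.preconnectedSpace isPreconnected_Icc
  have hγr : Continuous fun x : Set.Icc s s' => γ x := hc.restrict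
  have hlc : IsLocallyConstant fun x : Set.Icc s s' => ω.f i (γ x) - ω.f j (γ x) := by
    rw [IsLocallyConstant.iff_exists_open]
    intro x
    obtain ⟨W, hWo, hWx, hW⟩ := ω.locConst i j (γ x) (hmaps x x.2)
    exact ⟨(fun x : Set.Icc s s' => γ x) ⁻¹' W, hWo.preimage hγr, hWx,
      fun y hy => hW (γ y) ⟨hy, hmaps y y.2⟩⟩
  exact hlc.apply_eq_of_preconnectedSpace ⟨s', hs'⟩ ⟨s, hs⟩

private lemma lemmaB (ω : ClosedOneForm X) {γ : ℝ → X} {a b r : ℝ} {j : ω.ι}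
    (hc : ContinuousOn γ (Set.Icc a b))
    (hmaps : ∀ x ∈ Set.Icc a b, γ x ∈ ω.U j) (hr : ω.IsPathIntegral γ a b r) :
    r = ω.f j (γ b) - ω.f j (γ a) := by
  obtain ⟨n, t, idx, ht0, htn, hmono, hch, hsum⟩ := hr
  have hmono' := chain_mono hmono
  have key : ∀ m < n, ω.f (idx m) (γ (t (m + 1))) - ω.f (idx m) (γ (t m)) =
      ω.f j (γ (t (m + 1))) - ω.f j (γ (t m)) := by
    intro m hm
    have hsub : Set.Icc (t m) (t (m + 1)) ⊆ Set.Icc a b := by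
      intro x hx
      exact ⟨le_trans (ht0 ▸ hmono' 0 m (Nat.zero_le _) hm.le) hx.1,
        le_trans hx.2 (htn ▸ hmono' (m + 1) n hm (le_refl n))⟩
    have hmm : t m ≤ t (m + 1) := hmono m hm
    have := ω.lemmaA (hc.mono hsub) (i := idx m) (j := j)
      (fun x hx => ⟨hch m hm x hx, hmaps x (hsub hx)⟩)
      ⟨le_refl _, hmm⟩ ⟨hmm, le_refl _⟩
    linarith
  rw [hsum, Finset.sum_congr rfl (fun m hm => key m (Finset.mem_range.mp hm)),
    Finset.sum_range_sub (fun m => ω.f j (γ (t m))), ht0, htn]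

private lemma split (ω : ClosedOneForm X) {γ : ℝ → X} {a b c r : ℝ}
    (hr : ω.IsPathIntegral γ a b r) (hac : a ≤ c) (hcb : c ≤ b) :
    ∃ r1 r2, ω.IsPathIntegral γ a c r1 ∧ ω.IsPathIntegral γ c b r2 ∧ r = r1 + r2 := by
  obtain ⟨n, t, idx, ht0, htn, hmono, hch, hsum⟩ := hr
  obtain ⟨j0, hj0⟩ := ω.covers (γ c)
  refine ⟨_, _,
    ⟨n, fun k => min (t k) c, fun m => if c ≤ t m then j0 else idx m,
      by simp [ht0, hac], by simp [htn, hcb],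
      fun m hm => min_le_min (hmono m hm) le_rfl, ?_, rfl⟩,
    ⟨n, fun k => max (t k) c, fun m => if t (m + 1) ≤ c then j0 else idx m,
      by simp [ht0, hac], by simp [htn, hcb],
      fun m hm => max_le_max (hmono m hm) le_rfl, ?_, rfl⟩, ?_⟩
  · intro m hm s hs
    simp only at hs ⊢
    by_cases hcm : c ≤ t m
    · have h1 : min (t m) c = c := min_eq_right hcm
      have h2 : min (t (m + 1)) c = c := min_eq_right (le_trans hcm (hmono m hm))
      rw [h1, h2] at hs
      have : s = c := le_antisymm hs.2 hs.1
      simpa [hcm, this] using hj0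
    · have h1 : min (t m) c = t m := min_eq_left (le_of_not_ge hcm)
      rw [h1] at hs
      have : s ∈ Set.Icc (t m) (t (m + 1)) := ⟨hs.1, le_trans hs.2 (min_le_left _ _)⟩
      simpa [hcm] using hch m hm s this
  · intro m hm s hs
    simp only at hs ⊢
    by_cases hcm : t (m + 1) ≤ c
    · have h1 : max (t m) c = c := max_eq_right (le_trans (hmono m hm) hcm)
      have h2 : max (t (m + 1)) c = c := max_eq_right hcm
      rw [h1, h2] at hs
      have : s = c := le_antisymm hs.2 hs.1
      simpa [hcm, this] using hj0
    · have h2 : max (t (m + 1)) c = t (m + 1) := max_eq_left (le_of_not_ge hcm)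
      rw [h2] at hs
      have : s ∈ Set.Icc (t m) (t (m + 1)) := ⟨le_trans (le_max_left _ _) hs.1, hs.2⟩
      simpa [hcm] using hch m hm s this
  · rw [hsum, ← Finset.sum_add_distrib]
    refine Finset.sum_congr rfl (fun m hm => ?_)
    have hm' := Finset.mem_range.mp hm
    have hmm : t m ≤ t (m + 1) := hmono m hm'
    by_cases h1 : c ≤ t m
    · have e1 : min (t m) c = c := min_eq_right h1
      have e2 : min (t (m + 1)) c = c := min_eq_right (le_trans h1 hmm)
      have e3 : max (t m) c = t m := max_eq_left h1
      by_cases h2 : t (m + 1) ≤ c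
      · have ha : t m = c := le_antisymm (le_trans hmm h2) h1
        have hb : t (m + 1) = c := le_antisymm h2 (le_trans h1 hmm)
        simp [h1, h2, e1, e2, ha, hb]
      · have e4 : max (t (m + 1)) c = t (m + 1) := max_eq_left (le_of_not_ge h2)
        simp only [if_pos h1, if_neg h2, e1, e2, e3, e4]
        ring
    · have e1 : min (t m) c = t m := min_eq_left (le_of_not_ge h1)
      by_cases h2 : t (m + 1) ≤ c
      · have e2 : min (t (m + 1)) c = t (m + 1) := min_eq_left h2
        have e3 : max (t m) c = c := max_eq_right (le_of_not_ge h1)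
        have e4 : max (t (m + 1)) c = c := max_eq_right h2
        simp only [if_neg h1, if_pos h2, e1, e2, e3, e4]
        ring
      · have e2 : min (t (m + 1)) c = c := min_eq_right (le_of_not_ge h2)
        have e3 : max (t m) c = c := max_eq_right (le_of_not_ge h1)
        have e4 : max (t (m + 1)) c = t (m + 1) := max_eq_left (le_of_not_ge h2)
        simp only [if_neg h1, if_neg h2, e1, e2, e3, e4]
        ring

private lemma integral_refl (ω : ClosedOneForm X) {γ : ℝ → X} {a r : ℝ}
    (hr : ω.IsPathIntegral γ a a r) : r = 0 := by
  obtain ⟨n, t, idx, ht0, htn, hmono, hch, hsum⟩ := hr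
  have hmono' := chain_mono hmono
  have hall : ∀ m ≤ n, t m = a := fun m hm =>
    le_antisymm (htn ▸ hmono' m n hm le_rfl) (ht0 ▸ hmono' 0 m (Nat.zero_le _) hm)
  rw [hsum]
  refine Finset.sum_eq_zero (fun m hm => ?_)
  have hm' := Finset.mem_range.mp hm
  rw [hall m hm'.le, hall (m + 1) hm']
  ring

private lemma unique_aux (ω : ClosedOneForm X) (γ : ℝ → X) :
    ∀ n : ℕ, ∀ a b r r' : ℝ, ∀ t : ℕ → ℝ, ∀ idx : ℕ → ω.ι,
    ContinuousOn γ (Set.Icc a b) →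
    t 0 = a → t n = b → (∀ m < n, t m ≤ t (m + 1)) →
    (∀ m < n, ∀ s ∈ Set.Icc (t m) (t (m + 1)), γ s ∈ ω.U (idx m)) →
    r = ∑ m ∈ Finset.range n, (ω.f (idx m) (γ (t (m + 1))) - ω.f (idx m) (γ (t m))) →
    ω.IsPathIntegral γ a b r' → r = r' := by
  intro n
  induction n with
  | zero =>
    intro a b r r' t idx hc ht0 htn hmono hch hsum h2
    have hab : a = b := ht0 ▸ htn ▸ rfl
    subst hab
    rw [hsum, ω.integral_refl h2]
    simp
  | succ n ih =>
    intro a b r r' t idx hc ht0 htn hmono hch hsum h2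
    have hac : a ≤ t n := ht0 ▸ chain_mono hmono 0 n (Nat.zero_le _) (Nat.le_succ n)
    have hcb : t n ≤ b := htn ▸ hmono n (Nat.lt_succ_self n)
    obtain ⟨r1, r2, hr1, hr2, hsplit⟩ := ω.split h2 hac hcb
    have hlast : ∀ x ∈ Set.Icc (t n) b, γ x ∈ ω.U (idx n) := by
      intro x hx
      exact hch n (Nat.lt_succ_self n) x ⟨hx.1, htn ▸ hx.2⟩
    have hr2' : r2 = ω.f (idx n) (γ b) - ω.f (idx n) (γ (t n)) :=
      ω.lemmaB (hc.mono (Set.Icc_subset_Icc hac le_rfl)) hlast hr2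
    have hr1' : (∑ m ∈ Finset.range n,
        (ω.f (idx m) (γ (t (m + 1))) - ω.f (idx m) (γ (t m)))) = r1 :=
      ih a (t n) _ r1 t idx (hc.mono (Set.Icc_subset_Icc le_rfl hcb)) ht0 rfl
        (fun m hm => hmono m (hm.trans (Nat.lt_succ_self n)))
        (fun m hm => hch m (hm.trans (Nat.lt_succ_self n))) rfl hr1
    rw [hsum, Finset.sum_range_succ, hsplit, ← hr1', hr2', htn]

private lemma integral_unique (ω : ClosedOneForm X) {γ : ℝ → X} {a b r r' : ℝ}
    (hc : ContinuousOn γ (Set.Icc a b))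
    (h1 : ω.IsPathIntegral γ a b r) (h2 : ω.IsPathIntegral γ a b r') : r = r' := by
  obtain ⟨n, t, idx, ht0, htn, hmono, hch, hsum⟩ := h1
  exact ω.unique_aux γ n a b r r' t idx hc ht0 htn hmono hch hsum h2

private lemma isPathIntegral_addFun_iff (ω : ClosedOneForm X) (g : X → ℝ)
    (hg : Continuous g) {γ : ℝ → X} {a b r : ℝ} :
    (ω.addFun g hg).IsPathIntegral γ a b r ↔
      ω.IsPathIntegral γ a b (r - (g (γ b) - g (γ a))) := by
  constructor <;> rintro ⟨n, t, idx, ht0, htn, hmono, hch, hsum⟩ <;>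
    refine ⟨n, t, idx, ht0, htn, hmono, hch, ?_⟩ <;>
    · have tel : (∑ m ∈ Finset.range n, (g (γ (t (m + 1))) - g (γ (t m)))) =
          g (γ b) - g (γ a) := by
        rw [Finset.sum_range_sub (fun m => g (γ (t m))), ht0, htn]
      have expand : ∀ m, ((ω.addFun g hg).f (idx m) (γ (t (m + 1))) -
          (ω.addFun g hg).f (idx m) (γ (t m))) =
          (ω.f (idx m) (γ (t (m + 1))) - ω.f (idx m) (γ (t m))) +
          (g (γ (t (m + 1))) - g (γ (t m))) := by
        intro m
        show (ω.f (idx m) (γ (t (m + 1))) + g (γ (t (m + 1)))) -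
          (ω.f (idx m) (γ (t m)) + g (γ (t m))) = _
        ring
      simp only [expand, Finset.sum_add_distrib, tel] at hsum ⊢
      linarith [hsum]

private lemma exists_integral_of_le (ω : ClosedOneForm X) {γ : ℝ → X} {N : ℝ}
    (hN : 0 < N) (h : ω.pathIntegral γ 0 1 ≤ -N) :
    ∃ r, ω.IsPathIntegral γ 0 1 r := by
  by_contra hne
  rw [pathIntegral, dif_neg hne] at h
  linarith

private lemma pathIntegral_addFun (ω : ClosedOneForm X) (g : X → ℝ) (hg : Continuous g)
    (γ : ℝ → X) (hc : ContinuousOn γ (Set.Icc 0 1))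
    (hex : ∃ r, ω.IsPathIntegral γ 0 1 r) :
    (ω.addFun g hg).pathIntegral γ 0 1 = ω.pathIntegral γ 0 1 + (g (γ 1) - g (γ 0)) := by
  have hex' : ∃ r, (ω.addFun g hg).IsPathIntegral γ 0 1 r := by
    obtain ⟨r, hr⟩ := hex
    refine ⟨r + (g (γ 1) - g (γ 0)), (ω.isPathIntegral_addFun_iff g hg).mpr ?_⟩
    simpa using hr
  rw [pathIntegral, pathIntegral, dif_pos hex, dif_pos hex']
  have h1 := hex.choose_spec
  have h2 := (ω.isPathIntegral_addFun_iff g hg).mp hex'.choose_spec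
  have := ω.integral_unique hc h1 h2
  linarith

private lemma slice_cont {A : Set X} {H : X × ℝ → X}
    (hH : ContinuousOn H (A ×ˢ Set.Icc (0 : ℝ) 1)) {a : X} (ha : a ∈ A) :
    ContinuousOn (fun t => H (a, t)) (Set.Icc (0 : ℝ) 1) := by
  have hmap : Set.MapsTo (fun t : ℝ => ((a : X), t)) (Set.Icc (0 : ℝ) 1)
      (A ×ˢ Set.Icc (0 : ℝ) 1) := fun t ht => ⟨ha, ht⟩
  exact hH.comp ((continuous_const.prodMk continuous_id).continuousOn) hmap

private lemma nmovable_addFun (ω : ClosedOneForm X) (g : X → ℝ) (hg : Continuous g)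
    {A : Set X} {N M : ℝ} (hM : ∀ x : X, |g x| ≤ M) (hN : 0 < N)
    (h : ω.NMovable A (N + 2 * M)) : (ω.addFun g hg).NMovable A N := by
  obtain ⟨H, hH, hH0, hHI⟩ := h
  refine ⟨H, hH, hH0, fun a ha => ?_⟩
  have hMnn : 0 ≤ M := (abs_nonneg _).trans (hM a)
  have hle := hHI a ha
  have hex := ω.exists_integral_of_le (by linarith) hle
  rw [ω.pathIntegral_addFun g hg _ (slice_cont hH ha) hex]
  have h1 := abs_le.mp (hM (H (a, 1)))
  have h0 := abs_le.mp (hM (H (a, 0)))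
  linarith

private lemma nmovable_of_addFun (ω : ClosedOneForm X) (g : X → ℝ) (hg : Continuous g)
    {A : Set X} {N M : ℝ} (hM : ∀ x : X, |g x| ≤ M) (hN : 0 < N)
    (h : (ω.addFun g hg).NMovable A (N + 2 * M)) : ω.NMovable A N := by
  obtain ⟨H, hH, hH0, hHI⟩ := h
  refine ⟨H, hH, hH0, fun a ha => ?_⟩
  have hMnn : 0 ≤ M := (abs_nonneg _).trans (hM a)
  have hle := hHI a ha
  have hex' := (ω.addFun g hg).exists_integral_of_le (by linarith) hle
  have hex : ∃ r, ω.IsPathIntegral (fun t => H (a, t)) 0 1 r := by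
    obtain ⟨r, hr⟩ := hex'
    exact ⟨_, (ω.isPathIntegral_addFun_iff g hg).mp hr⟩
  rw [ω.pathIntegral_addFun g hg _ (slice_cont hH ha) hex] at hle
  have h1 := abs_le.mp (hM (H (a, 1)))
  have h0 := abs_le.mp (hM (H (a, 0)))
  linarith

end ClosedOneForm

end Aux

/-- **`cat(X, ω)` depends only on the cohomology class of `ω`.**  Let `X` be a
compact topological space, `ω` a continuous closed 1-form on `X`, `f : X → ℝ`
continuous and `ω' = ω + df`.  Then `cat(X, ω) = cat(X, ω')`. -/
theorem catForm_eq_of_addFun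
    (X : Type) [TopologicalSpace X] [CompactSpace X]
    (ω : ClosedOneForm X) (f : X → ℝ) (hf : Continuous f) :
    ω.catForm = (ω.addFun f hf).catForm := by
  obtain ⟨C, hC⟩ := isCompact_univ.exists_bound_of_continuousOn hf.continuousOn
  set M := max C 0 with hMdef
  have hM : ∀ x : X, |f x| ≤ M := fun x => le_trans
    (by simpa [Real.norm_eq_abs] using hC x (Set.mem_univ x)) (le_max_left _ _)
  have hM0 : (0 : ℝ) ≤ M := le_max_right _ _
  unfold ClosedOneForm.catForm
  congr 1
  ext k
  constructor
  · intro h N hN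
    obtain ⟨A, hAc, hAm, hAcat⟩ := h (N + 2 * M) (by linarith)
    exact ⟨A, hAc, ω.nmovable_addFun f hf hM hN hAm, hAcat⟩
  · intro h N hN
    obtain ⟨A, hAc, hAm, hAcat⟩ := h (N + 2 * M) (by linarith)
    exact ⟨A, hAc, ω.nmovable_of_addFun f hf hM hN hAm, hAcat⟩
end
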